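/- arXiv:1202.3903 — 7 statements merged into one kernel-verified Lean document; each statement's English description precedes it below -/
import Mathlib

section
/- Let U be unitary on a Hilbert space H, φ a unit vector, and Ũ = (1 − |φ⟩⟨φ|)U. Then for every n ≥ 1, 1 = Σ_{k=1}^n |a_k|² + ‖Ũⁿφ‖², where a_k = ⟨φ, U Ũ^{k−1} φ⟩. Consequently the return probability R = Σ_{n≥1}|a_n|² = 1 − lim_{n→∞} ‖Ũⁿφ‖², and the limit exists. -/
open Filter

/-- **Survival probability decomposition and return probability.**
Let `U` be unitary on a complex Hilbert space `H`, `φ` a unit vector, and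
`Ũ = (1 - |φ⟩⟨φ|)U`, i.e. `Ũψ = Uψ - ⟨φ, Uψ⟩ φ`.  With first arrival amplitudes
`a k = ⟨φ, U Ũ^{k-1} φ⟩` (for `k ≥ 1`) one has, for every `n ≥ 1`,
`1 = ∑_{k=1}^n |a k|² + ‖Ũⁿφ‖²`.  Consequently `lim_n ‖Ũⁿφ‖²` exists and the
return probability satisfies `R = ∑_{n≥1} |a n|² = 1 - lim_n ‖Ũⁿφ‖²`. -/
theorem first_arrival_decomposition
    {H : Type*} [NormedAddCommGroup H] [InnerProductSpace ℂ H] [CompleteSpace H]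
    (U : H ≃ₗᵢ[ℂ] H) (φ : H) (hφ : ‖φ‖ = 1)
    (Ut : H → H) (hUt : ∀ ψ, Ut ψ = U ψ - (inner ℂ φ (U ψ) : ℂ) • φ)
    (a : ℕ → ℂ) (ha : ∀ k, a (k + 1) = (inner ℂ φ (U (Ut^[k] φ)) : ℂ)) :
    (∀ n, 1 ≤ n →
        (1 : ℝ) = ∑ k ∈ Finset.Icc 1 n, ‖a k‖ ^ 2 + ‖Ut^[n] φ‖ ^ 2) ∧
      ∃ L : ℝ, Tendsto (fun n => ‖Ut^[n] φ‖ ^ 2) atTop (nhds L) ∧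
        (∑' n : ℕ, ‖a (n + 1)‖ ^ 2) = 1 - L := by
  have hstep : ∀ ψ : H, ‖Ut ψ‖ ^ 2 = ‖ψ‖ ^ 2 - ‖(inner ℂ φ (U ψ) : ℂ)‖ ^ 2 := by
    intro ψ
    rw [hUt]
    set c : ℂ := inner ℂ φ (U ψ) with hc
    have h1 : ‖U ψ - c • φ‖ ^ 2 =
        ‖U ψ‖ ^ 2 - 2 * (RCLike.re (inner ℂ (U ψ) (c • φ) : ℂ)) + ‖c • φ‖ ^ 2 :=
      norm_sub_sq (𝕜 := ℂ) _ _
    have h2 : (inner ℂ (U ψ) (c • φ) : ℂ) = c * (starRingEnd ℂ) c := by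
      rw [inner_smul_right, ← inner_conj_symm, hc]
    have h3 : RCLike.re (c * (starRingEnd ℂ) c) = ‖c‖ ^ 2 := by
      rw [RCLike.mul_conj]
      simp
      norm_cast
    have h4 : ‖c • φ‖ ^ 2 = ‖c‖ ^ 2 := by
      rw [norm_smul, hφ, mul_one]
    rw [h1, h2, h3, h4, U.norm_map]
    ring
  set s : ℕ → ℝ := fun n => ‖Ut^[n] φ‖ ^ 2 with hs
  have hrec : ∀ k, s (k + 1) = s k - ‖a (k + 1)‖ ^ 2 := by
    intro k
    simp only [hs, Function.iterate_succ_apply']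
    rw [hstep, ha k]
  have hmain : ∀ n, (1 : ℝ) = ∑ k ∈ Finset.range n, ‖a (k + 1)‖ ^ 2 + s n := by
    intro n
    induction n with
    | zero => simp [hs, hφ]
    | succ n ih =>
      rw [Finset.sum_range_succ, hrec n]
      linarith
  have hnonneg : ∀ n, 0 ≤ s n := fun n => sq_nonneg _
  have hanti : Antitone s := by
    apply antitone_nat_of_succ_le
    intro n
    rw [hrec n]
    have := sq_nonneg ‖a (n + 1)‖
    linarith
  have hIcc : ∀ n, ∑ k ∈ Finset.Icc 1 n, ‖a k‖ ^ 2
      = ∑ k ∈ Finset.range n, ‖a (k + 1)‖ ^ 2 := by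
    intro n
    rw [← Finset.Ico_add_one_right_eq_Icc, Finset.sum_Ico_eq_sum_range]
    simp [add_comm]
  refine ⟨fun n _ => by rw [hIcc]; exact hmain n, ?_⟩
  have hbdd : BddBelow (Set.range s) := ⟨0, by rintro x ⟨n, rfl⟩; exact hnonneg n⟩
  have htend : Tendsto s atTop (nhds (⨅ n, s n)) := tendsto_atTop_ciInf hanti hbdd
  refine ⟨⨅ n, s n, htend, ?_⟩
  have hsum : HasSum (fun n => ‖a (n + 1)‖ ^ 2) (1 - ⨅ n, s n) := by
    rw [hasSum_iff_tendsto_nat_of_nonneg (fun n => sq_nonneg _)]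
    have : (fun n => ∑ i ∈ Finset.range n, ‖a (i + 1)‖ ^ 2) = fun n => 1 - s n := by
      funext n
      have := hmain n
      linarith
    rw [this]
    exact (tendsto_const_nhds.sub htend)
  exact hsum.tsum_eq
end

section
/- Let U be unitary with cyclic unit vector φ, Ũ = (1 − |φ⟩⟨φ|)U, G(z) = (1 − zU)⁻¹ and G̃(z) = (1 − zŨ)⁻¹ for |z| < 1. Then G̃(z)φ = G(z)φ / μ̂(z), where μ̂(z) = 1 + z⟨φ, U G(z)φ⟩ = ⟨φ, G(z)φ⟩ is the Stieltjes function of the spectral measure of (U, φ). -/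
/-- **Resolvent (Krein) formula for the rank-one absorbing perturbation.**
Let `U` be unitary on a complex Hilbert space `H` with cyclic unit vector `φ`,
`Ũ = (1 - |φ⟩⟨φ|)U`, and for `|z| < 1` let `G(z) = (1 - zU)⁻¹` and
`G̃(z) = (1 - zŨ)⁻¹` (given here as two-sided inverses).  Then
`G̃(z)φ = G(z)φ / μ̂(z)` where `μ̂(z) = ⟨φ, G(z)φ⟩ = 1 + z⟨φ, U G(z)φ⟩` is the
Stieltjes function of the spectral measure of `(U, φ)`. -/
theorem krein_resolvent_formula
    {H : Type*} [NormedAddCommGroup H] [InnerProductSpace ℂ H] [CompleteSpace H]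
    (U : H →L[ℂ] H) (hU : U ∈ unitary (H →L[ℂ] H))
    (φ : H) (hφ : ‖φ‖ = 1)
    (hcyc : ∀ ψ : H, ψ ∈ (Submodule.span ℂ {χ : H | ∃ n : ℕ, χ = (U ^ n) φ}).topologicalClosure)
    (z : ℂ) (hz : ‖z‖ < 1)
    (Ut G Gt : H →L[ℂ] H)
    (hUt : ∀ x, Ut x = U x - (inner ℂ φ (U x) : ℂ) • φ)
    (hG : (1 - z • U) * G = 1 ∧ G * (1 - z • U) = 1)
    (hGt : (1 - z • Ut) * Gt = 1 ∧ Gt * (1 - z • Ut) = 1) :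
    Gt φ = ((inner ℂ φ (G φ) : ℂ))⁻¹ • G φ ∧
      (inner ℂ φ (G φ) : ℂ) = 1 + z * (inner ℂ φ (U (G φ)) : ℂ) := by
  obtain ⟨hG1, hG2⟩ := hG
  obtain ⟨hGt1, hGt2⟩ := hGt
  set μ : ℂ := (inner ℂ φ (G φ) : ℂ) with hμdef
  have hφ0 : φ ≠ 0 := by
    intro h; rw [h, norm_zero] at hφ; norm_num at hφ
  -- (1 - zU) G φ = φ
  have hGφ : G φ - z • U (G φ) = φ := by
    have := congrArg (fun f => f φ) hG1
    simpa [ContinuousLinearMap.sub_apply, ContinuousLinearMap.smul_apply] using this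
  have hGφ' : G φ = φ + z • U (G φ) := sub_eq_iff_eq_add.mp hGφ
  -- the unit-vector fact
  have hinnerφφ : (inner ℂ φ φ : ℂ) = 1 := by
    rw [inner_self_eq_norm_sq_to_K, hφ]; norm_num
  -- μ = 1 + z ⟨φ, U G φ⟩
  have hmu2 : μ = 1 + z * (inner ℂ φ (U (G φ)) : ℂ) := by
    rw [hμdef]
    conv_lhs => rw [hGφ']
    rw [inner_add_right, inner_smul_right, hinnerφφ]
  -- U preserves norms
  have hUnorm : ∀ x : H, ‖U x‖ = ‖x‖ := by
    intro x
    have hadj : (ContinuousLinearMap.adjoint U) * U = 1 := by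
      rw [← ContinuousLinearMap.star_eq_adjoint]; exact hU.1
    have h1 : (inner ℂ (U x) (U x) : ℂ) = inner ℂ x x := by
      rw [← ContinuousLinearMap.adjoint_inner_left]
      have : (ContinuousLinearMap.adjoint U) (U x) = x := by
        have := congrArg (fun f => f x) hadj
        simpa using this
      rw [this]
    rw [inner_self_eq_norm_sq_to_K, inner_self_eq_norm_sq_to_K] at h1
    have h2 : (‖U x‖ : ℝ) ^ 2 = ‖x‖ ^ 2 := by exact_mod_cast h1
    nlinarith [norm_nonneg (U x), norm_nonneg x]
  -- G φ ≠ 0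
  have hGφ0 : G φ ≠ 0 := by
    intro h
    rw [h] at hGφ
    simp at hGφ
    exact hφ0 hGφ.symm
  -- μ ≠ 0 via Re μ > 0
  have hμ0 : μ ≠ 0 := by
    have hrew : μ = (inner ℂ (G φ - z • U (G φ)) (G φ) : ℂ) := by
      rw [hμdef, hGφ]
    have hre : μ.re = ‖G φ‖ ^ 2 - ((starRingEnd ℂ) z * inner ℂ (U (G φ)) (G φ)).re := by
      have hself : (inner ℂ (G φ) (G φ) : ℂ) = (‖G φ‖ : ℂ) ^ 2 := inner_self_eq_norm_sq_to_K _
      rw [hrew, inner_sub_left, inner_smul_left, hself, Complex.sub_re, ← Complex.ofReal_pow,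
        Complex.ofReal_re]
    have hbound : |((starRingEnd ℂ) z * inner ℂ (U (G φ)) (G φ)).re| ≤ ‖z‖ * ‖G φ‖ ^ 2 := by
      calc |((starRingEnd ℂ) z * inner ℂ (U (G φ)) (G φ)).re|
          ≤ ‖(starRingEnd ℂ) z * (inner ℂ (U (G φ)) (G φ) : ℂ)‖ := Complex.abs_re_le_norm _
        _ = ‖z‖ * ‖(inner ℂ (U (G φ)) (G φ) : ℂ)‖ := by
            rw [norm_mul, RCLike.norm_conj]
        _ ≤ ‖z‖ * (‖U (G φ)‖ * ‖G φ‖) := by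
            gcongr; exact norm_inner_le_norm _ _
        _ = ‖z‖ * ‖G φ‖ ^ 2 := by rw [hUnorm]; ring
    have hpos : 0 < μ.re := by
      have hn : 0 < ‖G φ‖ := norm_pos_iff.mpr hGφ0
      have h2 : 0 < ‖G φ‖ ^ 2 := by positivity
      have := abs_le.mp hbound
      nlinarith [norm_nonneg z]
    intro h
    rw [h] at hpos
    simp at hpos
  refine ⟨?_, hmu2⟩
  -- (1 - z Ut) (μ⁻¹ • G φ) = φ
  have hkey : (1 - z • Ut) (μ⁻¹ • G φ) = φ := by
    have hUtG : Ut (G φ) = U (G φ) - (inner ℂ φ (U (G φ)) : ℂ) • φ := hUt (G φ)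
    have hcalc : G φ - z • Ut (G φ) = μ • φ := by
      have hre : G φ - (z • U (G φ) - z • (inner ℂ φ (U (G φ)) : ℂ) • φ)
          = (G φ - z • U (G φ)) + z • (inner ℂ φ (U (G φ)) : ℂ) • φ := by abel
      rw [hUtG, smul_sub, hre, hGφ, smul_smul, hmu2, add_smul, one_smul]
    calc (1 - z • Ut) (μ⁻¹ • G φ)
        = μ⁻¹ • (G φ - z • Ut (G φ)) := by
          simp [ContinuousLinearMap.sub_apply, ContinuousLinearMap.smul_apply, smul_sub,
            smul_comm μ⁻¹ z]
      _ = μ⁻¹ • (μ • φ) := by rw [hcalc]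
      _ = φ := by rw [smul_smul, inv_mul_cancel₀ hμ0, one_smul]
  calc Gt φ = Gt ((1 - z • Ut) (μ⁻¹ • G φ)) := by rw [hkey]
    _ = (Gt * (1 - z • Ut)) (μ⁻¹ • G φ) := rfl
    _ = μ⁻¹ • G φ := by rw [hGt2]; rfl
end

section
/- With a_n = ⟨φ, U Ũ^{n−1} φ⟩ the first arrival amplitudes of a unitary U with unit vector φ, the generating function â(z) = Σ_{n≥1} a_n zⁿ satisfies â(z) = (μ̂(z) − 1)/μ̂(z) = 1 − 1/μ̂(z) for |z| < 1, where μ̂(z) = Σ_{n≥0} ⟨φ, Uⁿφ⟩ zⁿ. -/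
open scoped InnerProductSpace

/-- **Quantum renewal equation.**  Let `U` be unitary on a complex Hilbert space,
`φ` a unit vector, `Ũ = (1 - |φ⟩⟨φ|)U`, and let `a n = ⟨φ, U Ũ^{n-1} φ⟩` be the
first arrival amplitudes.  Then for `|z| < 1` the generating function
`A(z) = ∑_{n≥1} a n zⁿ` satisfies `A(z) = (μ̂(z) - 1)/μ̂(z) = 1 - 1/μ̂(z)`,
where `μ̂(z) = ∑_{n≥0} ⟨φ, Uⁿφ⟩ zⁿ` is the Stieltjes function. -/
theorem quantum_renewal_equation
    {H : Type*} [NormedAddCommGroup H] [InnerProductSpace ℂ H] [CompleteSpace H]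
    (U : H ≃ₗᵢ[ℂ] H) (φ : H) (hφ : ‖φ‖ = 1)
    (Ut : H → H) (hUt : ∀ ψ, Ut ψ = U ψ - (inner ℂ φ (U ψ) : ℂ) • φ)
    (a : ℕ → ℂ) (ha : ∀ k, a (k + 1) = (inner ℂ φ (U (Ut^[k] φ)) : ℂ))
    (z : ℂ) (hz : ‖z‖ < 1) :
    (∑' n : ℕ, a (n + 1) * z ^ (n + 1)) =
        ((∑' n : ℕ, (inner ℂ φ ((⇑U)^[n] φ) : ℂ) * z ^ n) - 1) /
          (∑' n : ℕ, (inner ℂ φ ((⇑U)^[n] φ) : ℂ) * z ^ n) ∧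
      (∑' n : ℕ, a (n + 1) * z ^ (n + 1)) =
        1 - (∑' n : ℕ, (inner ℂ φ ((⇑U)^[n] φ) : ℂ) * z ^ n)⁻¹ := by
  have hφφ : (inner ℂ φ φ : ℂ) = 1 := by
    rw [inner_self_eq_norm_sq_to_K, hφ]; norm_num
  set UL : H →L[ℂ] H := U.toLinearIsometry.toContinuousLinearMap with hULdef
  set T : H →L[ℂ] H := UL - ((innerSL ℂ φ).smulRight φ).comp UL with hTdef
  have hULapp : ∀ x, UL x = U x := fun x => rfl
  have hULnorm : ∀ x, ‖UL x‖ = ‖x‖ := fun x => U.norm_map x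
  have hTapp : ∀ x, T x = U x - (inner ℂ φ (U x) : ℂ) • φ := by
    intro x; simp [hTdef, hULdef]
  have hUtT : Ut = ⇑T := by funext x; rw [hUt, hTapp]
  subst hUtT
  -- T is a contraction
  have hTnorm : ∀ x, ‖T x‖ ≤ ‖x‖ := by
    intro x
    set c : ℂ := (inner ℂ φ (U x) : ℂ) with hc
    have hsq : ‖T x‖ ^ 2 = ‖x‖ ^ 2 - ‖c‖ ^ 2 := by
      rw [hTapp, norm_sub_sq (𝕜 := ℂ), inner_smul_right]
      have h1 : (inner ℂ (U x) φ : ℂ) = starRingEnd ℂ c := by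
        rw [hc, ← inner_conj_symm]
      rw [h1, Complex.mul_conj]
      have h2 : ‖c • φ‖ = ‖c‖ := by rw [norm_smul, hφ, mul_one]
      have h3 : ‖U x‖ = ‖x‖ := U.norm_map x
      rw [h2, h3]
      simp only [Complex.normSq_eq_norm_sq, ← Complex.ofReal_pow,
        Complex.ofReal_re, RCLike.re_to_complex, ← hc]
      ring
    nlinarith [norm_nonneg (T x), norm_nonneg x, sq_nonneg ‖c‖]
  have hTiter : ∀ n, ‖(⇑T)^[n] φ‖ ≤ 1 := by
    intro n; induction n with
    | zero => simp [hφ]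
    | succ n ih =>
      rw [Function.iterate_succ_apply']
      exact le_trans (hTnorm _) ih
  have hUiter : ∀ n : ℕ, ‖(⇑U)^[n] φ‖ = 1 := by
    intro n; induction n with
    | zero => simpa using hφ
    | succ n ih => rw [Function.iterate_succ_apply', U.norm_map]; exact ih
  -- summability
  have hgeo : Summable (fun n : ℕ => ‖z‖ ^ n) :=
    summable_geometric_of_lt_one (norm_nonneg z) hz
  have S1 : Summable (fun n : ℕ => z ^ n • (⇑U)^[n] φ) := by
    apply Summable.of_norm_bounded hgeo
    intro n; rw [norm_smul, norm_pow, hUiter, mul_one]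
  have S2 : Summable (fun n : ℕ => z ^ n • (⇑T)^[n] φ) := by
    apply Summable.of_norm_bounded hgeo
    intro n; rw [norm_smul, norm_pow]
    exact mul_le_of_le_one_right (by positivity) (hTiter n)
  set ψ := ∑' n : ℕ, z ^ n • (⇑U)^[n] φ with hψdef
  set ξ := ∑' n : ℕ, z ^ n • (⇑T)^[n] φ with hξdef
  -- resolvent equations
  have hψ : ψ = φ + z • UL ψ := by
    conv_lhs => rw [hψdef, Summable.tsum_eq_zero_add S1]
    congr 1
    · simp
    · have h1 : ∀ n : ℕ, z ^ (n+1) • (⇑U)^[n+1] φ = (z • UL) (z ^ n • (⇑U)^[n] φ) := by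
        intro n
        rw [Function.iterate_succ_apply']
        simp only [ContinuousLinearMap.smul_apply, map_smul, hULapp, smul_smul, pow_succ]
      calc (∑' n : ℕ, z ^ (n+1) • (⇑U)^[n+1] φ)
          = ∑' n : ℕ, (z • UL) (z ^ n • (⇑U)^[n] φ) := tsum_congr h1
        _ = (z • UL) ψ := ((z • UL).map_tsum S1).symm
        _ = z • UL ψ := rfl
  have hξ : ξ = φ + z • T ξ := by
    conv_lhs => rw [hξdef, Summable.tsum_eq_zero_add S2]
    congr 1
    · simp
    · have h1 : ∀ n : ℕ, z ^ (n+1) • (⇑T)^[n+1] φ = (z • T) (z ^ n • (⇑T)^[n] φ) := by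
        intro n
        rw [Function.iterate_succ_apply']
        simp only [ContinuousLinearMap.smul_apply, map_smul, smul_smul, pow_succ]
      calc (∑' n : ℕ, z ^ (n+1) • (⇑T)^[n+1] φ)
          = ∑' n : ℕ, (z • T) (z ^ n • (⇑T)^[n] φ) := tsum_congr h1
        _ = (z • T) ξ := ((z • T).map_tsum S2).symm
        _ = z • T ξ := rfl
  -- the Stieltjes function
  have hμ : (inner ℂ φ ψ : ℂ) = ∑' n : ℕ, (inner ℂ φ ((⇑U)^[n] φ) : ℂ) * z ^ n := by
    have h0 : (inner ℂ φ ψ : ℂ) = innerSL ℂ φ ψ := rfl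
    rw [h0, hψdef, (innerSL ℂ φ).map_tsum S1]
    refine tsum_congr fun n => ?_
    simp only [innerSL_apply_apply, inner_smul_right]
    ring
  -- the first-arrival generating function
  have hA : (∑' n : ℕ, a (n + 1) * z ^ (n + 1)) = z * (inner ℂ φ (UL ξ) : ℂ) := by
    have h1 : ∀ n : ℕ, a (n + 1) * z ^ (n + 1)
        = (z • ((innerSL ℂ φ).comp UL)) (z ^ n • (⇑T)^[n] φ) := by
      intro n
      simp only [ContinuousLinearMap.smul_apply, ContinuousLinearMap.comp_apply,
        map_smul, innerSL_apply_apply, ha n, hULapp, smul_eq_mul, pow_succ]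
      ring
    calc (∑' n : ℕ, a (n + 1) * z ^ (n + 1))
        = ∑' n : ℕ, (z • ((innerSL ℂ φ).comp UL)) (z ^ n • (⇑T)^[n] φ) := tsum_congr h1
      _ = (z • ((innerSL ℂ φ).comp UL)) ξ := ((z • ((innerSL ℂ φ).comp UL)).map_tsum S2).symm
      _ = z * (inner ℂ φ (UL ξ) : ℂ) := rfl
  set A := ∑' n : ℕ, a (n + 1) * z ^ (n + 1) with hAdef
  set μ := ∑' n : ℕ, (inner ℂ φ ((⇑U)^[n] φ) : ℂ) * z ^ n with hμdef
  -- ⟨φ, ξ⟩ = 1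
  have hξ1 : (inner ℂ φ ξ : ℂ) = 1 := by
    rw [hξ, inner_add_right, inner_smul_right, hφφ]
    have h0 : (inner ℂ φ (T ξ) : ℂ) = 0 := by
      rw [hTapp, inner_sub_right, inner_smul_right, hφφ, mul_one, sub_self]
    rw [h0, mul_zero, add_zero]
  -- ξ = (1 - A) • ψ
  have hξeq : ξ = (1 - A) • φ + z • UL ξ := by
    calc ξ = φ + z • T ξ := hξ
      _ = φ + z • (U ξ - (inner ℂ φ (U ξ) : ℂ) • φ) := by rw [hTapp]
      _ = (1 - z * (inner ℂ φ (UL ξ) : ℂ)) • φ + z • UL ξ := by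
          rw [hULapp]; module
      _ = (1 - A) • φ + z • UL ξ := by rw [← hA]
  have hw : ξ - (1 - A) • ψ = z • UL (ξ - (1 - A) • ψ) := by
    conv_lhs => rw [hξeq, hψ]
    rw [map_sub, map_smul]
    module
  have hw0 : ξ = (1 - A) • ψ := by
    by_contra hne
    have h1 : ξ - (1 - A) • ψ ≠ 0 := sub_ne_zero.mpr hne
    have h2 : (0:ℝ) < ‖ξ - (1 - A) • ψ‖ := norm_pos_iff.mpr h1
    have h3 : ‖ξ - (1 - A) • ψ‖ = ‖z‖ * ‖ξ - (1 - A) • ψ‖ := by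
      conv_lhs => rw [hw]
      rw [norm_smul, hULnorm]
    nlinarith
  -- renewal identity : (1 - A) * μ = 1
  have key : (1 - A) * μ = 1 := by
    calc (1 - A) * μ = (inner ℂ φ ((1 - A) • ψ) : ℂ) := by rw [inner_smul_right, hμ]
      _ = (inner ℂ φ ξ : ℂ) := by rw [← hw0]
      _ = 1 := hξ1
  have hμ0 : μ ≠ 0 := by
    intro h; rw [h, mul_zero] at key; exact one_ne_zero key.symm
  constructor
  · field_simp
    linear_combination -key
  · field_simp
    linear_combination -key
end

section
/- Let a_1, a_2 ∈ ℂ be the first two Taylor-type coefficients of first arrival amplitudes of some unitary pair (U, φ). Then (1 − |a_1|²)² ≥ |a_2|². Moreover, the set of achievable sequences (|a_1|², |a_2|², ...) of first return probabilities is not convex. -/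
open scoped ComplexConjugate

/-- The first arrival amplitude `a_{n+1} = ⟨φ, U Ũⁿ φ⟩`, where
`Ũ = (1 - |φ⟩⟨φ|)U` is the absorbing (monitored) evolution. -/
noncomputable def firstArrival {H : Type*} [NormedAddCommGroup H]
    [InnerProductSpace ℂ H] (U : H ≃ₗᵢ[ℂ] H) (φ : H) (n : ℕ) : ℂ :=
  (inner ℂ φ (U ((fun ψ => U ψ - (inner ℂ φ (U ψ) : ℂ) • φ)^[n] φ)) : ℂ)

/-- A sequence `s` of first return probabilities is achievable if it arises from
some unitary pair `(U, φ)` as `s n = |a_{n+1}|²`. -/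
def AchievableReturnProbs (s : ℕ → ℝ) : Prop :=
  ∃ (H : Type) (_ : NormedAddCommGroup H) (_ : InnerProductSpace ℂ H)
    (_ : CompleteSpace H) (U : H ≃ₗᵢ[ℂ] H) (φ : H),
    ‖φ‖ = 1 ∧ ∀ n, s n = ‖firstArrival U φ n‖ ^ 2

lemma aux_norm {H : Type*} [NormedAddCommGroup H] [InnerProductSpace ℂ H]
    (x y : H) (hx : ‖x‖ = 1) (hy : ‖y‖ = 1) :
    ‖x - (inner ℂ y x : ℂ) • y‖ ^ 2 = 1 - ‖(inner ℂ y x : ℂ)‖ ^ 2 := by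
  rw [@norm_sub_sq ℂ]
  have h1 : (inner ℂ x ((inner ℂ y x : ℂ) • y) : ℂ) = (inner ℂ y x : ℂ) * conj (inner ℂ y x : ℂ) := by
    rw [inner_smul_right, ← inner_conj_symm x y]
  rw [h1, Complex.mul_conj, norm_smul, hx, hy]
  simp only [Complex.normSq_eq_norm_sq, Complex.ofReal_re,
    RCLike.ofReal_re, RCLike.re_to_complex, mul_one]
  ring

lemma key_ineq {H : Type*} [NormedAddCommGroup H] [InnerProductSpace ℂ H]
    (U : H ≃ₗᵢ[ℂ] H) (φ : H) (hφ : ‖φ‖ = 1) :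
    ‖(inner ℂ φ (U (U φ - (inner ℂ φ (U φ) : ℂ) • φ)) : ℂ)‖ ^ 2 ≤
      (1 - ‖(inner ℂ φ (U φ) : ℂ)‖ ^ 2) ^ 2 := by
  have hUφ : ‖U φ‖ = 1 := by rw [U.norm_map, hφ]
  set a : ℂ := inner ℂ φ (U φ) with ha
  set w : H := U φ - a • φ with hw
  set P : H := φ - (inner ℂ (U φ) φ : ℂ) • U φ with hP
  have hwnorm : ‖w‖ ^ 2 = 1 - ‖a‖ ^ 2 := aux_norm (U φ) φ hUφ hφ
  have hPnorm : ‖P‖ ^ 2 = 1 - ‖a‖ ^ 2 := by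
    rw [hP, aux_norm φ (U φ) hφ hUφ, norm_inner_symm]
  have hwφ : (inner ℂ w φ : ℂ) = 0 := by
    have hφφ : (inner ℂ φ φ : ℂ) = 1 := by
      rw [inner_self_eq_norm_sq_to_K, hφ]; norm_num
    rw [hw, inner_sub_left, inner_smul_left, hφφ, mul_one, ha, inner_conj_symm, sub_self]
  have hkey : (inner ℂ (U w) φ : ℂ) = inner ℂ (U w) P := by
    rw [hP, inner_sub_right, inner_smul_right, U.inner_map_map, hwφ, mul_zero, sub_zero]
  have hcs : ‖(inner ℂ (U w) P : ℂ)‖ ≤ ‖U w‖ * ‖P‖ := norm_inner_le_norm _ _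
  have hn : ‖(inner ℂ φ (U w) : ℂ)‖ = ‖(inner ℂ (U w) P : ℂ)‖ := by
    rw [← hkey, norm_inner_symm]
  rw [hn]
  calc ‖(inner ℂ (U w) P : ℂ)‖ ^ 2 ≤ (‖U w‖ * ‖P‖) ^ 2 := by
        exact pow_le_pow_left₀ (norm_nonneg _) hcs 2
    _ = ‖w‖ ^ 2 * ‖P‖ ^ 2 := by rw [mul_pow, U.norm_map]
    _ = (1 - ‖a‖ ^ 2) ^ 2 := by rw [hwnorm, hPnorm]; ring

lemma ach_s : AchievableReturnProbs (fun n => if n = 0 then 1 else 0) := by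
  refine ⟨ℂ, inferInstance, inferInstance, inferInstance,
    LinearIsometryEquiv.refl ℂ ℂ, 1, by norm_num, ?_⟩
  intro n
  have hg : (fun ψ : ℂ => (LinearIsometryEquiv.refl ℂ ℂ) ψ -
      (inner ℂ (1:ℂ) ((LinearIsometryEquiv.refl ℂ ℂ) ψ) : ℂ) • (1:ℂ)) = fun _ => (0:ℂ) := by
    funext ψ; simp [RCLike.inner_apply]
  cases n with
  | zero => simp [firstArrival, RCLike.inner_apply]
  | succ m =>
    simp only [firstArrival, hg, Function.iterate_succ_apply]
    rw [Function.iterate_fixed rfl]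
    simp [RCLike.inner_apply]

noncomputable def Uswap : EuclideanSpace ℂ (Fin 2) ≃ₗᵢ[ℂ] EuclideanSpace ℂ (Fin 2) :=
  LinearIsometryEquiv.piLpCongrLeft 2 ℂ ℂ (Equiv.swap 0 1)

lemma Uswap_single (i : Fin 2) (a : ℂ) :
    Uswap (EuclideanSpace.single i a) = EuclideanSpace.single (Equiv.swap 0 1 i) a := by
  unfold Uswap
  rw [EuclideanSpace.piLpCongrLeft_single]

lemma ach_t : AchievableReturnProbs (fun n => if n = 1 then 1 else 0) := by
  refine ⟨EuclideanSpace ℂ (Fin 2), inferInstance, inferInstance, inferInstance,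
    Uswap, EuclideanSpace.single 0 1, by simp [EuclideanSpace.norm_single], ?_⟩
  intro n
  set φ : EuclideanSpace ℂ (Fin 2) := EuclideanSpace.single 0 1 with hφdef
  have hU0 : Uswap φ = EuclideanSpace.single 1 1 := by
    rw [hφdef, Uswap_single]; norm_num
  have hU1 : Uswap (EuclideanSpace.single 1 1) = φ := by
    rw [Uswap_single]; norm_num [hφdef]
  have hinner01 : (inner ℂ φ (EuclideanSpace.single 1 1) : ℂ) = 0 := by
    rw [hφdef]
    simp [EuclideanSpace.inner_single_left, EuclideanSpace.single_apply]
  have hinner00 : (inner ℂ φ φ : ℂ) = 1 := by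
    rw [hφdef]
    simp [EuclideanSpace.inner_single_left, EuclideanSpace.single_apply]
  set g : EuclideanSpace ℂ (Fin 2) → EuclideanSpace ℂ (Fin 2) :=
    fun ψ => Uswap ψ - (inner ℂ φ (Uswap ψ) : ℂ) • φ with hgdef
  have hgφ : g φ = EuclideanSpace.single 1 1 := by
    rw [hgdef]; simp [hU0, hinner01]
  have hg1 : g (EuclideanSpace.single 1 1) = 0 := by
    rw [hgdef]; simp only [hU1, hinner00, one_smul, sub_self]
  have hg0 : g 0 = 0 := by
    rw [hgdef]; simp
  have hfa : ∀ n, firstArrival Uswap φ n = (inner ℂ φ (Uswap (g^[n] φ)) : ℂ) := by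
    intro n; rfl
  match n with
  | 0 => rw [hfa]; simp [hU0, hinner01]
  | 1 =>
    rw [hfa, Function.iterate_one, hgφ, hU1, hinner00]
    norm_num
  | (m+2) =>
    rw [hfa]
    have : g^[m+2] φ = 0 := by
      rw [Function.iterate_succ_apply, Function.iterate_succ_apply, hgφ, hg1,
        Function.iterate_fixed hg0]
    rw [this]
    simp

lemma hfa01 {H : Type*} [NormedAddCommGroup H] [InnerProductSpace ℂ H]
    (U : H ≃ₗᵢ[ℂ] H) (φ : H) (hφ : ‖φ‖ = 1) :
    ‖firstArrival U φ 1‖ ^ 2 ≤ (1 - ‖firstArrival U φ 0‖ ^ 2) ^ 2 := by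
  have h := key_ineq U φ hφ
  simpa only [firstArrival, Function.iterate_one, Function.iterate_zero, id_eq] using h

/-- **Constraints on first return probabilities.**  For any unitary pair `(U, φ)`
with `‖φ‖ = 1`, the first two arrival amplitudes `a₁, a₂` satisfy
`(1 - |a₁|²)² ≥ |a₂|²`; moreover the set of achievable sequences of first return
probabilities `(|a₁|², |a₂|², …)` is not convex. -/
theorem first_return_constraints :
    (∀ (H : Type*) (_ : NormedAddCommGroup H) (_ : InnerProductSpace ℂ H)
        (_ : CompleteSpace H) (U : H ≃ₗᵢ[ℂ] H) (φ : H), ‖φ‖ = 1 →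
        (1 - ‖firstArrival U φ 0‖ ^ 2) ^ 2 ≥ ‖firstArrival U φ 1‖ ^ 2) ∧
      ¬ Convex ℝ {s : ℕ → ℝ | AchievableReturnProbs s} := by
  constructor
  · intro H _ _ _ U φ hφ
    exact hfa01 U φ hφ
  · intro hconv
    have hm := hconv ach_s ach_t (by norm_num : (0:ℝ) ≤ 1/2) (by norm_num : (0:ℝ) ≤ 1/2)
      (by norm_num)
    obtain ⟨H, i1, i2, i3, U, φ, hφ, hval⟩ := hm
    have h2 := @hfa01 H i1 i2 U φ hφ
    have h0 := hval 0
    have hv1 := hval 1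
    simp only [Pi.add_apply, Pi.smul_apply, smul_eq_mul] at h0 hv1
    norm_num at h0 hv1
    rw [← h0, ← hv1] at h2
    norm_num at h2
end

section
/- Let μ be a probability measure on S¹ whose pure point part has positive total mass. Then the SJK expected return time τ^{SJK} = Σ_n n q_n^{SJK} is finite, where q_n^{SJK} = p_n ∏_{k=1}^{n−1}(1 − p_k) and p_n = |μ_n|² with μ_n the n-th Fourier coefficient of μ. -/
open MeasureTheory

noncomputable instance : MeasurableSpace Circle := borel Circle
instance : BorelSpace Circle := ⟨rfl⟩

section SJKAux
open Finset
open scoped ComplexConjugate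

lemma coe_zpow' (z : Circle) (m : ℤ) : ((z ^ m : Circle) : ℂ) = (z : ℂ) ^ m := by
  cases m with
  | ofNat n => simpa using map_pow Circle.coeHom z n
  | negSucc n =>
      simp only [zpow_negSucc, Circle.coe_inv, ← map_pow Circle.coeHom]
      rfl

lemma cont_coe : Continuous ((↑) : Circle → ℂ) := continuous_subtype_val

lemma integrable_aux (μ : Measure Circle) [IsProbabilityMeasure μ] (u : Circle) (m : ℤ) :
    Integrable (fun z : Circle => (((z * u⁻¹) ^ m : Circle) : ℂ)) μ := by
  have h1 : Continuous fun z : Circle => (z * u⁻¹) ^ m :=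
    (continuous_zpow m).comp (continuous_id.mul continuous_const)
  exact (cont_coe.comp h1).integrable_of_hasCompactSupport (HasCompactSupport.of_compactSpace _)

lemma key_lower (μ : Measure Circle) [IsProbabilityMeasure μ] (u : Circle) (n : ℕ) :
    (n:ℝ)^2 * (μ {u}).toReal ≤ ∑ j ∈ range n, ∑ k ∈ range n,
      ‖∫ z : Circle, (((z * u⁻¹) ^ ((j:ℤ) - k) : Circle) : ℂ) ∂μ‖ := by
  set T : Circle → ℂ := fun z => ∑ k ∈ range n, (((z * u⁻¹) ^ (k:ℤ) : Circle) : ℂ) with hT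
  have hTcont : Continuous T := by
    apply continuous_finset_sum
    intro k _
    have h1 : Continuous fun z : Circle => (z * u⁻¹) ^ (k:ℤ) :=
      (continuous_zpow (k:ℤ)).comp (continuous_id.mul continuous_const)
    exact cont_coe.comp h1
  -- pointwise expansion
  have hexp : ∀ z : Circle, Complex.normSq (T z)
      = ∑ j ∈ range n, ∑ k ∈ range n,
          ((((z * u⁻¹) ^ ((j:ℤ) - k) : Circle) : ℂ)).re := by
    intro z
    have h1 : (T z) * conj (T z) = ∑ j ∈ range n, ∑ k ∈ range n,
        (((z * u⁻¹) ^ ((j:ℤ) - k) : Circle) : ℂ) := by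
      rw [hT]
      simp only [map_sum, Finset.sum_mul_sum]
      refine Finset.sum_congr rfl fun j _ => Finset.sum_congr rfl fun k _ => ?_
      rw [← Circle.coe_inv_eq_conj, ← Circle.coe_mul, ← zpow_neg, ← zpow_add, ← sub_eq_add_neg]
    have h2 : (Complex.normSq (T z) : ℂ) = (T z) * conj (T z) := (Complex.mul_conj _).symm
    calc Complex.normSq (T z) = ((Complex.normSq (T z) : ℂ)).re := by simp
      _ = ((T z) * conj (T z)).re := by rw [h2]
      _ = _ := by rw [h1]; simp [Complex.re_sum]
  -- lower bound by value at the atom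
  have hint : Integrable (fun z => Complex.normSq (T z)) μ :=
    (Complex.continuous_normSq.comp hTcont).integrable_of_hasCompactSupport
      (HasCompactSupport.of_compactSpace _)
  have h3 : (n:ℝ)^2 * (μ {u}).toReal ≤ ∫ z, Complex.normSq (T z) ∂μ := by
    have hnonneg : (0:Circle → ℝ) ≤ᵐ[μ] fun z => Complex.normSq (T z) :=
      Filter.Eventually.of_forall fun z => Complex.normSq_nonneg _
    have h4 : ∫ z in ({u} : Set Circle), Complex.normSq (T z) ∂μ
        ≤ ∫ z, Complex.normSq (T z) ∂μ := setIntegral_le_integral hint hnonneg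
    have h5 : ∫ z in ({u} : Set Circle), Complex.normSq (T z) ∂μ
        = (μ {u}).toReal * Complex.normSq (T u) := by
      rw [integral_singleton]; simp [smul_eq_mul, measureReal_def]
    have h6 : T u = (n : ℂ) := by
      rw [hT]
      simp
    rw [h5, h6] at h4
    calc (n:ℝ)^2 * (μ {u}).toReal = (μ {u}).toReal * Complex.normSq ((n:ℕ):ℂ) := by
          rw [Complex.normSq_natCast]; ring
      _ ≤ _ := h4
  -- compute the integral
  have h7 : ∫ z, Complex.normSq (T z) ∂μ = ∑ j ∈ range n, ∑ k ∈ range n,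
      (∫ z : Circle, (((z * u⁻¹) ^ ((j:ℤ) - k) : Circle) : ℂ) ∂μ).re := by
    simp_rw [hexp]
    rw [integral_finset_sum]
    · refine Finset.sum_congr rfl fun j _ => ?_
      rw [integral_finset_sum]
      · refine Finset.sum_congr rfl fun k _ => ?_
        have := integral_re (integrable_aux μ u ((j:ℤ) - k))
        simpa using this
      · exact fun k _ => (integrable_aux μ u _).re
    · exact fun j _ => integrable_finset_sum _ (fun k _ => (integrable_aux μ u _).re)
  refine h3.trans ?_
  rw [h7]
  refine Finset.sum_le_sum fun j _ => Finset.sum_le_sum fun k _ => ?_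
  exact Complex.re_le_norm _

lemma shifted_le (G : ℤ → ℝ) (hGnn : ∀ m, 0 ≤ G m) (j n : ℕ) (hj : j < n) :
    ∑ i ∈ range j, G ((i:ℕ) + 1 : ℕ) ≤ ∑ m ∈ Ico 1 n, G (m:ℕ) := by
  rw [Finset.sum_Ico_eq_sum_range]
  calc ∑ i ∈ range j, G ((i + 1 : ℕ))
      ≤ ∑ i ∈ range (n-1), G ((i + 1 : ℕ)) :=
        Finset.sum_le_sum_of_subset_of_nonneg (Finset.range_subset_range.2 (by omega))
          (fun i _ _ => hGnn _)
    _ = ∑ i ∈ range (n-1), G ((1 + i : ℕ)) := Finset.sum_congr rfl fun i _ => by rw [add_comm]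

lemma row_bound (G : ℤ → ℝ) (hG0 : G 0 = 1) (hGsymm : ∀ m : ℤ, G (-m) = G m)
    (hGnn : ∀ m, 0 ≤ G m) (n j : ℕ) (hj : j < n) :
    ∑ k ∈ range n, G ((j:ℤ) - k) ≤ 1 + 2 * ∑ m ∈ Ico 1 n, G (m:ℕ) := by
  have hsplit := Finset.sum_range_add_sum_Ico (fun k : ℕ => G ((j:ℤ) - k)) hj.le
  have hA : ∑ k ∈ range j, G ((j:ℤ) - k) ≤ ∑ m ∈ Ico 1 n, G (m:ℕ) := by
    have h1 : ∑ k ∈ range j, G ((j:ℤ) - k) = ∑ k ∈ range j, G ((j - k : ℕ)) := by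
      refine Finset.sum_congr rfl fun k hk => ?_
      rw [Nat.cast_sub (Finset.mem_range.1 hk).le]
    have h2 : ∑ k ∈ range j, G (((j - 1 - k) + 1 : ℕ)) = ∑ k ∈ range j, G ((k + 1 : ℕ)) :=
      Finset.sum_range_reflect (fun k => G ((k + 1 : ℕ))) j
    have h3 : ∑ k ∈ range j, G ((j - k : ℕ)) = ∑ k ∈ range j, G (((j - 1 - k) + 1 : ℕ)) := by
      refine Finset.sum_congr rfl fun k hk => ?_
      have := Finset.mem_range.1 hk
      congr 2
      omega
    rw [h1, h3, h2]
    exact shifted_le G hGnn j n hj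
  have hB : ∑ k ∈ Ico j n, G ((j:ℤ) - k) ≤ 1 + ∑ m ∈ Ico 1 n, G (m:ℕ) := by
    rw [Finset.sum_Ico_eq_sum_range]
    have h1 : ∀ i : ℕ, G ((j:ℤ) - ((j + i : ℕ) : ℤ)) = G (i:ℕ) := by
      intro i
      rw [show ((j:ℤ) - ((j + i : ℕ):ℤ)) = -(i:ℤ) by push_cast; ring, hGsymm]
    simp_rw [h1]
    have hnj : n - j = (n - j - 1) + 1 := by omega
    rw [hnj, Finset.sum_range_succ']
    rw [show ((0:ℕ):ℤ) = (0:ℤ) by norm_num, hG0, add_comm]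
    gcongr
    exact shifted_le G hGnn (n - j - 1) n (by omega)
  linarith

section
variable (μ : Measure Circle) [IsProbabilityMeasure μ] (u : Circle)

lemma normF_le (m : ℤ) : ‖∫ z : Circle, (((z * u⁻¹) ^ m : Circle) : ℂ) ∂μ‖ ≤ 1 := by
  calc ‖∫ z : Circle, (((z * u⁻¹) ^ m : Circle) : ℂ) ∂μ‖
      ≤ ∫ z : Circle, ‖(((z * u⁻¹) ^ m : Circle) : ℂ)‖ ∂μ := norm_integral_le_integral_norm _
    _ = ∫ z : Circle, (1:ℝ) ∂μ := by
        congr 1; funext z; simp [Circle.norm_coe]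
    _ = 1 := by simp

lemma F_zero : (∫ z : Circle, (((z * u⁻¹) ^ (0:ℤ) : Circle) : ℂ) ∂μ) = 1 := by simp

lemma F_neg (m : ℤ) :
    (∫ z : Circle, (((z * u⁻¹) ^ (-m) : Circle) : ℂ) ∂μ)
      = conj (∫ z : Circle, (((z * u⁻¹) ^ m : Circle) : ℂ) ∂μ) := by
  rw [← integral_conj]
  congr 1; funext z
  rw [zpow_neg, Circle.coe_inv_eq_conj]

lemma F_norm_eq (m : ℕ) :
    ‖∫ z : Circle, (((z * u⁻¹) ^ (m:ℤ) : Circle) : ℂ) ∂μ‖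
      = ‖∫ z : Circle, (z : ℂ) ^ m ∂μ‖ := by
  have : ∀ z : Circle, (((z * u⁻¹) ^ (m:ℤ) : Circle) : ℂ) = (z:ℂ) ^ m * ((u⁻¹ : Circle) : ℂ) ^ m := by
    intro z
    rw [coe_zpow', zpow_natCast, Circle.coe_mul, mul_pow]
  simp_rw [this]
  rw [integral_mul_const]
  rw [norm_mul]
  simp [Circle.norm_coe, ← Circle.coe_inv]

end
end SJKAux

section SJKMain
open Finset
open scoped ComplexConjugate

/-- **Atoms make the SJK expected return time finite.**
Let `μ` be a probability measure on the unit circle whose pure point part has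
positive mass, i.e. `μ` has an atom.  With Fourier coefficients
`μ_n = ∫ uⁿ dμ`, `p_n = |μ_n|²` and SJK first-return probabilities
`q_n^{SJK} = p_n ∏_{k=1}^{n-1} (1 - p_k)`, the SJK expected return time
`τ^{SJK} = ∑ n q_n^{SJK}` is finite. -/
theorem SJK_expected_return_time_finite
    (μ : Measure Circle) [IsProbabilityMeasure μ]
    (hatom : ∃ u : Circle, 0 < μ {u})
    (p q : ℕ → ℝ)
    (hp : ∀ n, p n = ‖∫ u : Circle, (u : ℂ) ^ n ∂μ‖ ^ 2)
    (hq : ∀ n, q n = p n * ∏ k ∈ Finset.Ico 1 n, (1 - p k)) :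
    Summable (fun n : ℕ => (n : ℝ) * q n) := by
  obtain ⟨u, hu⟩ := hatom
  set c : ℝ := (μ {u}).toReal with hc_def
  have hc : 0 < c := ENNReal.toReal_pos hu.ne' (measure_ne_top μ _)
  set G : ℤ → ℝ := fun m => ‖∫ z : Circle, (((z * u⁻¹) ^ m : Circle) : ℂ) ∂μ‖ with hG_def
  have hG0 : G 0 = 1 := by rw [hG_def]; simp [F_zero μ u]
  have hGsymm : ∀ m : ℤ, G (-m) = G m := by
    intro m; rw [hG_def]; simp only [F_neg μ u m, RCLike.norm_conj]
  have hGnn : ∀ m, 0 ≤ G m := fun m => norm_nonneg _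
  have hGp : ∀ m : ℕ, G (m:ℤ) ^ 2 = p m := by
    intro m; rw [hG_def, hp]; simp only [F_norm_eq μ u m]
  -- basic facts about p
  have hp0 : ∀ m, 0 ≤ p m := fun m => by rw [hp]; positivity
  have hp1 : ∀ m, p m ≤ 1 := by
    intro m
    rw [hp]
    have h1 : ‖∫ z : Circle, (z : ℂ) ^ m ∂μ‖ ≤ 1 := by
      rw [← F_norm_eq μ u m]; exact normF_le μ u _
    nlinarith [norm_nonneg (∫ z : Circle, (z : ℂ) ^ m ∂μ)]
  have hq0 : ∀ n, 0 ≤ q n := by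
    intro n
    rw [hq]
    exact mul_nonneg (hp0 n) (Finset.prod_nonneg fun k _ => by linarith [hp1 k])
  -- the main lower bound on partial sums of p
  set S : ℕ → ℝ := fun n => ∑ m ∈ Ico 1 n, G (m:ℤ) with hS_def
  set P : ℕ → ℝ := fun n => ∑ m ∈ Ico 1 n, p m with hP_def
  have hSnn : ∀ n, 0 ≤ S n := fun n => Finset.sum_nonneg fun m _ => hGnn _
  have hkey : ∀ n : ℕ, (n:ℝ)^2 * c ≤ (n:ℝ) * (1 + 2 * S n) := by
    intro n
    refine (key_lower μ u n).trans ?_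
    calc ∑ j ∈ range n, ∑ k ∈ range n,
          ‖∫ z : Circle, (((z * u⁻¹) ^ ((j:ℤ) - k) : Circle) : ℂ) ∂μ‖
        = ∑ j ∈ range n, ∑ k ∈ range n, G ((j:ℤ) - k) := rfl
      _ ≤ ∑ _j ∈ range n, (1 + 2 * S n) :=
          Finset.sum_le_sum fun j hj =>
            row_bound G hG0 hGsymm hGnn n j (Finset.mem_range.1 hj)
      _ = (n:ℝ) * (1 + 2 * S n) := by
          rw [Finset.sum_const, Finset.card_range, nsmul_eq_mul]
  have hnc : ∀ n : ℕ, 1 ≤ n → (n:ℝ) * c ≤ 1 + 2 * S n := by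
    intro n hn
    have hnpos : (0:ℝ) < n := by exact_mod_cast hn
    have := hkey n
    nlinarith
  have hCS : ∀ n : ℕ, S n ^ 2 ≤ (n:ℝ) * P n := by
    intro n
    have h1 : S n ^ 2 ≤ (#(Ico 1 n) : ℝ) * ∑ m ∈ Ico 1 n, G (m:ℤ) ^ 2 :=
      sq_sum_le_card_mul_sum_sq
    have h2 : ∑ m ∈ Ico 1 n, G (m:ℤ) ^ 2 = P n :=
      Finset.sum_congr rfl fun m _ => hGp m
    have h3 : (#(Ico 1 n) : ℝ) ≤ (n:ℝ) := by
      rw [Nat.card_Ico]; exact_mod_cast Nat.sub_le n 1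
    calc S n ^ 2 ≤ (#(Ico 1 n) : ℝ) * P n := by rw [← h2]; exact h1
      _ ≤ (n:ℝ) * P n := by
          refine mul_le_mul_of_nonneg_right h3 ?_
          exact Finset.sum_nonneg fun m _ => hp0 m
  -- for n with n*c ≥ 2, P n ≥ n * c^2 / 16
  have hPlarge : ∀ n : ℕ, 2 ≤ (n:ℝ) * c → (n:ℝ) * c^2 / 16 ≤ P n := by
    intro n hn2
    have hn1 : 1 ≤ n := by
      by_contra h
      push_neg at h
      interval_cases n
      · simp at hn2; linarith
    have h1 := hnc n hn1
    have h2 := hCS n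
    have hnpos : (0:ℝ) < n := by exact_mod_cast hn1
    have hS4 : (n:ℝ) * c / 4 ≤ S n := by nlinarith
    nlinarith [hSnn n, sq_nonneg (S n - (n:ℝ)*c/4)]
  -- bound q n
  set r : ℝ := Real.exp (-(c^2/16)) with hr_def
  have hr0 : 0 < r := Real.exp_pos _
  have hr1 : r < 1 := by
    rw [hr_def, Real.exp_lt_one_iff]
    nlinarith
  have hqbound : ∀ n : ℕ, 2 ≤ (n:ℝ) * c → q n ≤ r ^ n := by
    intro n hn2
    have hprod : ∏ k ∈ Ico 1 n, (1 - p k) ≤ Real.exp (-(P n)) := by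
      calc ∏ k ∈ Ico 1 n, (1 - p k) ≤ ∏ k ∈ Ico 1 n, Real.exp (-(p k)) := by
            refine Finset.prod_le_prod (fun k _ => by linarith [hp1 k]) (fun k _ => ?_)
            linarith [Real.add_one_le_exp (-(p k))]
        _ = Real.exp (∑ k ∈ Ico 1 n, -(p k)) := (Real.exp_sum _ _).symm
        _ = Real.exp (-(P n)) := by rw [← Finset.sum_neg_distrib]
    have hexp : Real.exp (-(P n)) ≤ r ^ n := by
      rw [hr_def, ← Real.exp_nat_mul]
      apply Real.exp_le_exp.2
      have := hPlarge n hn2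
      push_cast
      nlinarith
    calc q n = p n * ∏ k ∈ Ico 1 n, (1 - p k) := hq n
      _ ≤ 1 * ∏ k ∈ Ico 1 n, (1 - p k) := by
          refine mul_le_mul_of_nonneg_right (hp1 n) ?_
          exact Finset.prod_nonneg fun k _ => by linarith [hp1 k]
      _ = ∏ k ∈ Ico 1 n, (1 - p k) := one_mul _
      _ ≤ Real.exp (-(P n)) := hprod
      _ ≤ r ^ n := hexp
  -- summability
  have hsum : Summable (fun n : ℕ => (n:ℝ) * r ^ n) := by
    have := summable_pow_mul_geometric_of_norm_lt_one 1 (r := r)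
      (by rw [Real.norm_eq_abs, abs_of_pos hr0]; exact hr1)
    simpa [pow_one] using this
  set N : ℕ := ⌈2/c⌉₊ with hN_def
  have hN : ∀ n : ℕ, N ≤ n → 2 ≤ (n:ℝ) * c := by
    intro n hn
    have h1 : 2/c ≤ (N:ℝ) := Nat.le_ceil _
    have h2 : (N:ℝ) ≤ n := by exact_mod_cast hn
    rw [div_le_iff₀ hc] at h1
    nlinarith
  rw [← summable_nat_add_iff N]
  have hsum' : Summable (fun n : ℕ => ((n + N : ℕ):ℝ) * r ^ (n + N)) := by
    have := (summable_nat_add_iff N).2 hsum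
    simpa using this
  refine Summable.of_nonneg_of_le (fun n => ?_) (fun n => ?_) hsum'
  · exact mul_nonneg (by positivity) (hq0 _)
  · have h1 := hqbound (n + N) (hN (n + N) (Nat.le_add_left _ _))
    have h2 : (0:ℝ) ≤ ((n + N : ℕ):ℝ) := by positivity
    exact mul_le_mul_of_nonneg_left h1 h2

end SJKMain
end

section
/- Let U be the rotation of ℝ² ⊂ ℂ² by angle θ = π/4 and φ = (1,0). Then the 'classical' first-return coefficients q_n defined via the renewal equation q̂(z) = 1 − 1/p̂(z) from p_n = |⟨φ, Uⁿφ⟩|² satisfy q_2 = −1/4 < 0; hence the sequence (q_n) is not a probability distribution. -/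
open Real

/-- **Negative 'classical' first-return coefficients for the rotation by π/4.**
Let `U` be the rotation of `ℝ²` by `θ = π/4` and `φ = (1,0)`, with return
probabilities `p n = |⟨φ, Uⁿφ⟩|²` and 'classical' first-return coefficients `q n`
defined by the renewal relation `q_n = p_n - ∑_{k=1}^{n-1} q_k p_{n-k}` (with
`q 0 = 0`).  Then `q 2 = -1/4 < 0`; hence `(q n)` is not a probability
distribution. -/
theorem rotation_renewal_negative
    (U : Matrix (Fin 2) (Fin 2) ℝ)
    (hU : U = !![Real.cos (π / 4), -Real.sin (π / 4);
                 Real.sin (π / 4),  Real.cos (π / 4)])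
    (p : ℕ → ℝ)
    (hp : ∀ n, p n = (dotProduct ![1, 0] ((U ^ n).mulVec ![1, 0])) ^ 2)
    (q : ℕ → ℝ) (hq0 : q 0 = 0)
    (hq : ∀ n, 1 ≤ n → q n = p n - ∑ k ∈ Finset.Ico 1 n, q k * p (n - k)) :
    q 2 = -(1 / 4) ∧ q 2 < 0 ∧ ¬ (∀ n, 0 ≤ q n) := by
  have hc := Real.cos_pi_div_four
  have hs := Real.sin_pi_div_four
  have h2 : (Real.sqrt 2) ^ 2 = 2 := Real.sq_sqrt (by norm_num)
  have hp1 : p 1 = 1 / 2 := by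
    rw [hp 1, pow_one, hU]
    simp [Matrix.mulVec, dotProduct, Fin.sum_univ_two, hc, hs]
    nlinarith [h2]
  have hU2 : U ^ 2 = !![0, -1; 1, 0] := by
    rw [hU, pow_two, Matrix.mul_fin_two]
    ext i j
    fin_cases i <;> fin_cases j <;> simp [hc, hs] <;> nlinarith [h2]
  have hp2 : p 2 = 0 := by
    rw [hp 2, hU2]
    simp [Matrix.mulVec, dotProduct, Fin.sum_univ_two]
  have hq1 : q 1 = 1 / 2 := by
    rw [hq 1 le_rfl]; simp [hp1]
  have hq2 : q 2 = -(1 / 4) := by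
    rw [hq 2 (by norm_num)]
    rw [show Finset.Ico 1 2 = {1} from rfl]
    simp [hq1, hp1, hp2]; norm_num
  refine ⟨hq2, by rw [hq2]; norm_num, fun h => ?_⟩
  have := h 2
  rw [hq2] at this
  norm_num at this
end

section
/- The Schur function f(z) = (z² − 1 + √((z²−1)² + 4|γ|²z²))/(2γ̄z²) (branch with √ → 1 as z → 0) of the coined quantum walk on ℤ₊ with constant coin parameter γ, 0 < |γ| < 1, satisfies the fixed point equation of the period-2 Schur algorithm with parameters (γ, 0, γ, 0, ...), and its L²-norm on the unit circle is ‖f‖² = (2/(π|γ|²))(ρ|γ| + (1 − 2ρ²) arcsin|γ|), where ρ = √(1 − |γ|²). -/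
open Real Filter

lemma sq_cpow_half (w : ℂ) : (w ^ ((1:ℂ)/2)) ^ 2 = w := by
  by_cases hw : w = 0
  · rw [hw, Complex.zero_cpow (by norm_num : (1:ℂ)/2 ≠ 0)]; ring
  · rw [sq, ← Complex.cpow_add _ _ hw]; norm_num

lemma re_cpow_half_nonneg (w : ℂ) : 0 ≤ (w ^ ((1:ℂ)/2)).re := by
  by_cases hw : w = 0
  · rw [hw, Complex.zero_cpow (by norm_num : (1:ℂ)/2 ≠ 0)]; simp
  · rw [Complex.cpow_def_of_ne_zero hw, Complex.exp_re]
    apply mul_nonneg (Real.exp_pos _).le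
    apply Real.cos_nonneg_of_mem_Icc
    have h1 : (Complex.log w * (1/2)).im = w.arg / 2 := by
      simp [Complex.mul_im, Complex.log_im]; ring
    rw [h1]
    constructor
    · nlinarith [Complex.neg_pi_lt_arg w, Real.pi_pos]
    · nlinarith [Complex.arg_le_pi w, Real.pi_pos]

lemma cpow_half_eq {w c : ℂ} (hc : c ^ 2 = w) (hre : 0 < c.re) : w ^ ((1:ℂ)/2) = c := by
  have h1 : (w ^ ((1:ℂ)/2) - c) * (w ^ ((1:ℂ)/2) + c) = 0 := by
    have := sq_cpow_half w
    linear_combination this - hc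
  rcases mul_eq_zero.1 h1 with h | h
  · exact sub_eq_zero.1 h
  · exfalso
    have h2 : w ^ ((1:ℂ)/2) = -c := by linear_combination h
    have := re_cpow_half_nonneg w
    rw [h2] at this
    simp [Complex.neg_re] at this
    linarith

noncomputable def Ff (γ : ℂ) (z : ℂ) : ℂ :=
  (z ^ 2 - 1 + ((z ^ 2 - 1) ^ 2 + 4 * ((‖γ‖ : ℂ)) ^ 2 * z ^ 2) ^ ((1 : ℂ) / 2)) /
    (2 * (starRingEnd ℂ) γ * z ^ 2)

lemma norm_sq_complex (γ : ℂ) : ((‖γ‖ : ℂ))^2 = γ * (starRingEnd ℂ) γ := by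
  rw [Complex.mul_conj]
  norm_cast
  rw [Complex.sq_norm]

lemma Ff_quad (γ : ℂ) (hγ0 : γ ≠ 0) (z : ℂ) (hz : z ≠ 0) :
    (starRingEnd ℂ) γ * z ^ 2 * (Ff γ z) ^ 2 = (z ^ 2 - 1) * Ff γ z + γ := by
  have hc : (starRingEnd ℂ) γ ≠ 0 := by simpa using hγ0
  have hz2 : z ^ 2 ≠ 0 := pow_ne_zero _ hz
  set S : ℂ := ((z ^ 2 - 1) ^ 2 + 4 * ((‖γ‖ : ℂ)) ^ 2 * z ^ 2) ^ ((1 : ℂ) / 2) with hSdef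
  have hS : S ^ 2 = (z ^ 2 - 1) ^ 2 + 4 * ((‖γ‖ : ℂ)) ^ 2 * z ^ 2 := sq_cpow_half _
  have ha := norm_sq_complex γ
  have h : 2 * (starRingEnd ℂ) γ * z ^ 2 * Ff γ z = (z ^ 2 - 1) + S := by
    rw [Ff, ← hSdef]
    field_simp
  apply mul_left_cancel₀ (show (4:ℂ) * (starRingEnd ℂ) γ * z ^ 2 ≠ 0 by
    simp [hc, hz])
  linear_combination (2 * (starRingEnd ℂ) γ * z ^ 2 * Ff γ z - (z ^ 2 - 1) + S) * h
    + hS + 4 * z ^ 2 * ha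

lemma part1 (γ : ℂ) (hγ0 : γ ≠ 0) (hγ1 : ‖γ‖ < 1) (z : ℂ) (hz : z ≠ 0) (w : ℂ)
    (hq : (starRingEnd ℂ) γ * z ^ 2 * w ^ 2 = (z ^ 2 - 1) * w + γ) :
    w = z⁻¹ * (z⁻¹ * (w - γ) / (1 - (starRingEnd ℂ) γ * w)) := by
  have hne : 1 - (starRingEnd ℂ) γ * w ≠ 0 := by
    intro h
    have h1 : (starRingEnd ℂ) γ * w = 1 := by linear_combination -h
    have h2 : γ * (starRingEnd ℂ) γ = 1 := by
      linear_combination (-(starRingEnd ℂ) γ) * hq + ((starRingEnd ℂ) γ * z ^ 2 * w + 1) * h1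
    have h3 : Complex.normSq γ = 1 := by
      have := congrArg Complex.re h2
      simpa [Complex.normSq_apply, Complex.mul_re] using this
    have h4 : ‖γ‖ ^ 2 = 1 := by
      rw [← Complex.sq_norm] at h3; exact h3
    nlinarith [norm_nonneg γ]
  have hne' : 1 - w * (starRingEnd ℂ) γ ≠ 0 := by rwa [mul_comm]
  field_simp
  linear_combination -hq

noncomputable def Dd (a : ℝ) (z : ℂ) : ℂ := (z ^ 2 - 1) ^ 2 + 4 * (a : ℂ) ^ 2 * z ^ 2

lemma D_re_nonneg {a : ℝ} (ha0 : 0 ≤ a) (ha : a ≤ 1) {z : ℂ} (hz : ‖z‖ ≤ 1)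
    (him : (Dd a z).im = 0) : 0 ≤ (Dd a z).re := by
  by_contra hre
  push_neg at hre
  set u : ℂ := z ^ 2 + ((2 * a ^ 2 - 1 : ℝ) : ℂ) with hudef
  have hu : u ^ 2 = Dd a z - ((4 * a ^ 2 * (1 - a ^ 2) : ℝ) : ℂ) := by
    rw [hudef, Dd]; push_cast; ring
  have h1a : (0:ℝ) ≤ 1 - a ^ 2 := by nlinarith
  have haa : (0:ℝ) ≤ 4 * a ^ 2 * (1 - a ^ 2) := by positivity
  have hure : (u ^ 2).re = (Dd a z).re - 4 * a ^ 2 * (1 - a ^ 2) := by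
    rw [hu]; simp only [Complex.sub_re, Complex.ofReal_re]
  have huim : (u ^ 2).im = 0 := by rw [hu]; simp only [Complex.sub_im, Complex.ofReal_im, him, sub_zero]
  have h1 : u.re ^ 2 - u.im ^ 2 < 0 := by
    have : (u ^ 2).re = u.re ^ 2 - u.im ^ 2 := by simp [sq, Complex.mul_re]
    rw [this] at hure; nlinarith
  have h2 : u.re = 0 := by
    have h2' : (u ^ 2).im = 2 * u.re * u.im := by simp [sq, Complex.mul_im]; ring
    rw [h2'] at huim
    rcases mul_eq_zero.1 huim with h | h
    · rcases mul_eq_zero.1 h with h' | h'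
      · norm_num at h'
      · exact h'
    · exfalso; rw [h] at h1; nlinarith [sq_nonneg u.re]
  -- now ‖z‖^4 = normSq (z^2) = (2a²-1)² + u.im²  > 1
  have hz2 : Complex.normSq (z ^ 2) = (2 * a ^ 2 - 1) ^ 2 + u.im ^ 2 := by
    have hzu : z ^ 2 = u - ((2 * a ^ 2 - 1 : ℝ) : ℂ) := by rw [hudef]; ring
    rw [hzu, Complex.normSq_apply, Complex.sub_re, Complex.sub_im, Complex.ofReal_re,
      Complex.ofReal_im, h2]
    ring
  have huim2 : u.im ^ 2 = 4 * a ^ 2 * (1 - a ^ 2) - (Dd a z).re := by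
    have : (u ^ 2).re = u.re ^ 2 - u.im ^ 2 := by simp [sq, Complex.mul_re]
    rw [this, h2] at hure; nlinarith
  have hgt : Complex.normSq (z ^ 2) > 1 := by rw [hz2, huim2]; nlinarith
  have hle : Complex.normSq (z ^ 2) ≤ 1 := by
    rw [← Complex.sq_norm, norm_pow]
    exact pow_le_one₀ (pow_nonneg (norm_nonneg z) 2) (pow_le_one₀ (norm_nonneg z) hz)
  linarith

lemma D_slit {a : ℝ} (ha0 : 0 ≤ a) (ha : a ≤ 1) {z : ℂ} (hz : ‖z‖ ≤ 1) :
    0 ≤ (Dd a z).re ∨ (Dd a z).im ≠ 0 := by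
  by_cases h : (Dd a z).im = 0
  · exact Or.inl (D_re_nonneg ha0 ha hz h)
  · exact Or.inr h

lemma continuousAt_Ff (γ : ℂ) (hγ0 : γ ≠ 0) (hγ1 : ‖γ‖ < 1) {z : ℂ} (hz0 : z ≠ 0)
    (hz : ‖z‖ ≤ 1) :
    ContinuousAt (fun w : ℂ => (w ^ 2 - 1 +
      ((w ^ 2 - 1) ^ 2 + 4 * ((‖γ‖ : ℂ)) ^ 2 * w ^ 2) ^ ((1 : ℂ) / 2)) /
        (2 * (starRingEnd ℂ) γ * w ^ 2)) z := by
  have hD : ContinuousAt (fun w : ℂ => (w ^ 2 - 1) ^ 2 + 4 * ((‖γ‖ : ℂ)) ^ 2 * w ^ 2) z := by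
    fun_prop
  have hslit := D_slit (norm_nonneg γ) hγ1.le hz
  have hcp : ContinuousAt
      (fun w : ℂ => ((w ^ 2 - 1) ^ 2 + 4 * ((‖γ‖ : ℂ)) ^ 2 * w ^ 2) ^ ((1 : ℂ) / 2)) z := by
    have h2 : (0:ℝ) < ((1:ℂ)/2).re := by norm_num
    exact (Complex.continuousAt_cpow_const_of_re_pos hslit h2).comp hD
  have hnum : ContinuousAt (fun w : ℂ => w ^ 2 - 1 +
      ((w ^ 2 - 1) ^ 2 + 4 * ((‖γ‖ : ℂ)) ^ 2 * w ^ 2) ^ ((1 : ℂ) / 2)) z :=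
    ContinuousAt.add (by fun_prop) hcp
  have hden : ContinuousAt (fun w : ℂ => 2 * (starRingEnd ℂ) γ * w ^ 2) z := by fun_prop
  exact hnum.div hden (by simp [hz0, hγ0])

noncomputable def qfun (a : ℝ) (t : ℝ) : ℝ :=
  1 + 2 / a ^ 2 * (max (Real.sin t ^ 2 - a ^ 2) 0
    - |Real.sin t| * Real.sqrt (max (Real.sin t ^ 2 - a ^ 2) 0))

lemma castC {x y : ℝ} (h : x = y) : (x:ℂ) = (y:ℂ) := by exact_mod_cast h

lemma norm_mk_sq (x y : ℝ) : ‖(x:ℂ) + (y:ℂ) * Complex.I‖ ^ 2 = x ^ 2 + y ^ 2 := by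
  rw [Complex.sq_norm, Complex.normSq_add_mul_I]

lemma Ff_boundary (γ : ℂ) (hγ0 : γ ≠ 0) (hγ1 : ‖γ‖ < 1) (t : ℝ) :
    ‖Ff γ (Complex.exp (Complex.I * (t:ℂ)))‖ ^ 2 = qfun ‖γ‖ t := by
  set a : ℝ := ‖γ‖ with hadef
  have ha0 : 0 < a := norm_pos_iff.2 hγ0
  set s : ℝ := Real.sin t with hsdef
  set c : ℝ := Real.cos t with hcdef
  set E : ℂ := Complex.exp (Complex.I * (t:ℂ)) with hEdef
  have hE : E = (c:ℂ) + (s:ℂ) * Complex.I := by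
    rw [hEdef, mul_comm, Complex.exp_mul_I, Complex.ofReal_cos, Complex.ofReal_sin]
  have hEne : E ≠ 0 := Complex.exp_ne_zero _
  have hEnorm : ‖E‖ = 1 := by
    rw [hEdef, mul_comm, Complex.norm_exp_ofReal_mul_I]
  have hcs : (c:ℂ) ^ 2 + (s:ℂ) ^ 2 = 1 := by
    have := Real.cos_sq_add_sin_sq t
    rw [hsdef, hcdef]; exact_mod_cast castC this
  have hA : E ^ 2 - 1 = 2 * (s:ℂ) * Complex.I * E := by
    rw [hE]; linear_combination hcs + (-(s:ℂ)^2) * Complex.I_sq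
  have hDE : (E ^ 2 - 1) ^ 2 + 4 * ((a:ℝ) : ℂ) ^ 2 * E ^ 2
      = 4 * E ^ 2 * (((a:ℝ):ℂ) ^ 2 - ((s:ℝ):ℂ) ^ 2) := by
    linear_combination (E ^ 2 - 1 + 2 * (s:ℂ) * Complex.I * E) * hA
      + 4 * (s:ℂ) ^ 2 * E ^ 2 * Complex.I_sq
  have hden : ‖2 * (starRingEnd ℂ) γ * E ^ 2‖ ^ 2 = 4 * a ^ 2 := by
    rw [norm_mul, norm_mul, norm_pow, hEnorm, RCLike.norm_conj]
    norm_num [← hadef]; ring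
  have hFval : Ff γ E = (E ^ 2 - 1 + ((E ^ 2 - 1) ^ 2 + 4 * ((a : ℂ)) ^ 2 * E ^ 2)
      ^ ((1 : ℂ) / 2)) / (2 * (starRingEnd ℂ) γ * E ^ 2) := rfl
  rcases le_or_gt (s ^ 2) (a ^ 2) with hcase | hcase
  · -- |f| = 1
    set b : ℝ := Real.sqrt (a ^ 2 - s ^ 2) with hbdef
    have hb : b ^ 2 = a ^ 2 - s ^ 2 := Real.sq_sqrt (by linarith)
    have hbC : ((b:ℝ):ℂ) ^ 2 = ((a:ℝ):ℂ) ^ 2 - ((s:ℝ):ℂ) ^ 2 := by exact_mod_cast castC hb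
    have hS0 : (2 * E * (b:ℂ)) ^ 2 = (E ^ 2 - 1) ^ 2 + 4 * ((a:ℝ):ℂ) ^ 2 * E ^ 2 := by
      rw [hDE]; linear_combination 4 * E ^ 2 * hbC
    have hS2 := sq_cpow_half ((E ^ 2 - 1) ^ 2 + 4 * ((a:ℝ):ℂ) ^ 2 * E ^ 2)
    have hzero : (((E ^ 2 - 1) ^ 2 + 4 * ((a:ℝ):ℂ) ^ 2 * E ^ 2) ^ ((1:ℂ)/2) - 2 * E * (b:ℂ))
        * (((E ^ 2 - 1) ^ 2 + 4 * ((a:ℝ):ℂ) ^ 2 * E ^ 2) ^ ((1:ℂ)/2) + 2 * E * (b:ℂ)) = 0 := by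
      linear_combination hS2 - hS0
    have hq : qfun a t = 1 := by
      rw [qfun, max_eq_right (by simpa using hcase), Real.sqrt_zero]
      field_simp
      ring
    rw [hq, hFval, norm_div, div_pow, hden]
    rcases mul_eq_zero.1 hzero with h | h
    · have hS : ((E ^ 2 - 1) ^ 2 + 4 * ((a:ℝ):ℂ) ^ 2 * E ^ 2) ^ ((1:ℂ)/2) = 2 * E * (b:ℂ) :=
        sub_eq_zero.1 h
      have hnum : E ^ 2 - 1 + 2 * E * (b:ℂ) = (2 * E) * ((b:ℂ) + (s:ℂ) * Complex.I) := by
        linear_combination hA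
      rw [hS, hnum, norm_mul, mul_pow, norm_mk_sq, norm_mul, hEnorm]
      rw [div_eq_one_iff_eq (by positivity)]
      norm_num
      linear_combination hb
    · have hS : ((E ^ 2 - 1) ^ 2 + 4 * ((a:ℝ):ℂ) ^ 2 * E ^ 2) ^ ((1:ℂ)/2) = -(2 * E * (b:ℂ)) :=
        eq_neg_of_add_eq_zero_left h
      have hnum : E ^ 2 - 1 + -(2 * E * (b:ℂ)) = (2 * E) * (((-b : ℝ):ℂ) + (s:ℂ) * Complex.I) := by
        push_cast; linear_combination hA
      rw [hS, hnum, norm_mul, mul_pow, norm_mk_sq, norm_mul, hEnorm]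
      rw [div_eq_one_iff_eq (by positivity)]
      norm_num
      linear_combination hb
  · -- |f| = (|s| - h)/a
    set h : ℝ := Real.sqrt (s ^ 2 - a ^ 2) with hhdef
    have hh : h ^ 2 = s ^ 2 - a ^ 2 := Real.sq_sqrt (by linarith)
    have hhpos : 0 < h := Real.sqrt_pos.2 (by linarith)
    have hs0 : s ≠ 0 := by intro h0; rw [h0] at hcase; nlinarith
    have hhs : h < |s| := by
      have h1 : h ^ 2 < |s| ^ 2 := by rw [_root_.sq_abs]; nlinarith
      exact lt_of_pow_lt_pow_left₀ 2 (abs_nonneg s) h1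
    set ε : ℝ := if 0 ≤ s then (1:ℝ) else -1 with hεdef
    have hεs : ε * s = |s| := by
      rw [hεdef]; rcases le_or_gt 0 s with h' | h'
      · rw [if_pos h', _root_.abs_of_nonneg h']; ring
      · rw [if_neg (not_le.2 h'), _root_.abs_of_neg h']; ring
    have hε2 : ε ^ 2 = 1 := by
      rw [hεdef]; rcases le_or_gt 0 s with h' | h' <;> simp [h', not_le.2]
    have hε2C : ((ε:ℝ):ℂ) ^ 2 = 1 := by exact_mod_cast castC hε2
    have hhC : ((h:ℝ):ℂ) ^ 2 = ((s:ℝ):ℂ) ^ 2 - ((a:ℝ):ℂ) ^ 2 := by exact_mod_cast castC hh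
    set c₀ : ℂ := -(2 * ((ε:ℝ):ℂ) * ((h:ℝ):ℂ)) * (Complex.I * E) with hc₀def
    have hc0sq : c₀ ^ 2 = (E ^ 2 - 1) ^ 2 + 4 * ((a:ℝ):ℂ) ^ 2 * E ^ 2 := by
      rw [hc₀def, hDE]
      linear_combination (4 * ((h:ℝ):ℂ) ^ 2 * Complex.I ^ 2 * E ^ 2) * hε2C
        + (4 * Complex.I ^ 2 * E ^ 2) * hhC
        + (4 * (((s:ℝ):ℂ) ^ 2 - ((a:ℝ):ℂ) ^ 2) * E ^ 2) * Complex.I_sq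
    have hc0val : c₀ = ((2 * ε * h * s : ℝ) : ℂ) + ((-(2 * ε * h * c) : ℝ) : ℂ) * Complex.I := by
      rw [hc₀def, hE]; push_cast
      linear_combination (-(2:ℂ) * (ε:ℂ) * (h:ℂ) * (s:ℂ)) * Complex.I_sq
    have hc0re : 0 < c₀.re := by
      rw [hc0val]
      simp only [Complex.add_re, Complex.ofReal_re, Complex.mul_re, Complex.I_re,
        Complex.ofReal_im, Complex.I_im]
      have : 2 * ε * h * s = 2 * h * |s| := by rw [← hεs]; ring
      simp only [this]
      nlinarith [abs_pos.2 hs0]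
    have hS : ((E ^ 2 - 1) ^ 2 + 4 * ((a:ℝ):ℂ) ^ 2 * E ^ 2) ^ ((1:ℂ)/2) = c₀ :=
      cpow_half_eq hc0sq hc0re
    have hnum : E ^ 2 - 1 + c₀ = (2 * Complex.I * E) * (((s - ε * h : ℝ)):ℂ) := by
      rw [hc₀def]; push_cast; linear_combination hA
    have habs : |s - ε * h| = |s| - h := by
      have h1 : ε * (|s| - h) = s - ε * h := by
        rw [← hεs]; linear_combination s * hε2
      rw [← h1, _root_.abs_mul]
      have hε1 : |ε| = 1 := by rcases le_or_gt 0 s with h' | h' <;> simp [hεdef, h', not_le.2]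
      rw [hε1, one_mul, _root_.abs_of_nonneg (by linarith)]
    rw [hFval, hS, norm_div, div_pow, hden, hnum]
    rw [norm_mul, mul_pow, Complex.norm_real, Real.norm_eq_abs, habs]
    have h2IE : ‖2 * Complex.I * E‖ = 2 := by
      rw [norm_mul, norm_mul, hEnorm, Complex.norm_I]; norm_num
    rw [h2IE]
    have hq : qfun a t = (2 ^ 2 * (|s| - h) ^ 2) / (4 * a ^ 2) := by
      rw [qfun, max_eq_left (by linarith), ← hhdef]
      field_simp
      nlinarith [_root_.sq_abs s, hh]
    rw [hq]
  done

noncomputable def phi (a : ℝ) (t : ℝ) : ℝ :=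
  1 + 2 / a ^ 2 * (Real.sin t ^ 2 - a ^ 2
    - Real.sin t * Real.sqrt (1 - a ^ 2 - Real.cos t ^ 2))

noncomputable def Gfun (a : ℝ) (t : ℝ) : ℝ :=
  t + 2 / a ^ 2 * (t / 2 - Real.sin t * Real.cos t / 2 - a ^ 2 * t
    + (Real.cos t * Real.sqrt (1 - a ^ 2 - Real.cos t ^ 2)
       + (1 - a ^ 2) * Real.arcsin (Real.cos t / Real.sqrt (1 - a ^ 2))) / 2)

lemma Gfun_deriv (a : ℝ) (ha0 : 0 < a) (ha1 : a < 1) {x : ℝ}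
    (hx1 : Real.arcsin a < x) (hx2 : x < π / 2) :
    HasDerivAt (Gfun a) (phi a x) x := by
  set α := Real.arcsin a with hα
  set ρ := Real.sqrt (1 - a ^ 2) with hρ
  have hρ2 : ρ ^ 2 = 1 - a ^ 2 := Real.sq_sqrt (by nlinarith)
  have hρpos : 0 < ρ := Real.sqrt_pos.2 (by nlinarith)
  have hαpos : 0 < α := Real.arcsin_pos.2 ha0
  have hxpos : 0 < x := lt_trans hαpos hx1
  have hsinpos : 0 < Real.sin x := Real.sin_pos_of_pos_of_lt_pi hxpos (by linarith [Real.pi_pos])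
  have hcospos : 0 < Real.cos x := Real.cos_pos_of_mem_Ioo ⟨by linarith, hx2⟩
  have hsin_gt : a < Real.sin x := by
    have h1 : Real.sin α < Real.sin x := by
      apply Real.strictMonoOn_sin ⟨?_, ?_⟩ ⟨?_, hx2.le⟩ hx1
      · linarith [Real.arcsin_mem_Icc a |>.1]
      · linarith
      · linarith
    rwa [Real.sin_arcsin (by linarith) ha1.le] at h1
  have hpyth := Real.sin_sq_add_cos_sq x
  have hu : 0 < 1 - a ^ 2 - Real.cos x ^ 2 := by nlinarith
  have hcoslt : Real.cos x < ρ := by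
    apply lt_of_pow_lt_pow_left₀ 2 hρpos.le
    rw [hρ2]; nlinarith
  set S := Real.sqrt (1 - a ^ 2 - Real.cos x ^ 2) with hS
  have hS2 : S ^ 2 = 1 - a ^ 2 - Real.cos x ^ 2 := Real.sq_sqrt hu.le
  have hSpos : 0 < S := Real.sqrt_pos.2 hu
  -- derivative pieces
  have d2 : HasDerivAt (fun t => Real.sin t * Real.cos t / 2)
      ((Real.cos x * Real.cos x + Real.sin x * -Real.sin x) / 2) x :=
    ((Real.hasDerivAt_sin x).mul (Real.hasDerivAt_cos x)).div_const 2
  have hcos2 : HasDerivAt (fun t => Real.cos t ^ 2)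
      ((2 : ℕ) * Real.cos x ^ 1 * -Real.sin x) x := (Real.hasDerivAt_cos x).pow 2
  have du : HasDerivAt (fun t => 1 - a ^ 2 - Real.cos t ^ 2)
      (0 - (2 : ℕ) * Real.cos x ^ 1 * -Real.sin x) x :=
    (hasDerivAt_const x (1 - a ^ 2)).sub hcos2
  have dsq : HasDerivAt (fun t => Real.sqrt (1 - a ^ 2 - Real.cos t ^ 2))
      ((0 - (2 : ℕ) * Real.cos x ^ 1 * -Real.sin x) / (2 * S)) x := du.sqrt (ne_of_gt hu)
  have dcs : HasDerivAt (fun t => Real.cos t * Real.sqrt (1 - a ^ 2 - Real.cos t ^ 2))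
      (-Real.sin x * S + Real.cos x * ((0 - (2 : ℕ) * Real.cos x ^ 1 * -Real.sin x) / (2 * S))) x :=
    (Real.hasDerivAt_cos x).mul dsq
  have darc_in : HasDerivAt (fun t => Real.cos t / ρ) (-Real.sin x / ρ) x :=
    (Real.hasDerivAt_cos x).div_const ρ
  have harg1 : Real.cos x / ρ ≠ -1 := by
    have : 0 < Real.cos x / ρ := div_pos hcospos hρpos
    linarith
  have harg2 : Real.cos x / ρ ≠ 1 := by
    have : Real.cos x / ρ < 1 := (div_lt_one hρpos).2 hcoslt
    linarith
  have darc : HasDerivAt (fun t => Real.arcsin (Real.cos t / ρ))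
      (1 / Real.sqrt (1 - (Real.cos x / ρ) ^ 2) * (-Real.sin x / ρ)) x :=
    by have h := (Real.hasDerivAt_arcsin harg1 harg2).comp x darc_in; exact h
  have hsqrtarg : Real.sqrt (1 - (Real.cos x / ρ) ^ 2) = S / ρ := by
    have h1 : 1 - (Real.cos x / ρ) ^ 2 = (S / ρ) ^ 2 := by
      rw [div_pow, div_pow, hS2, hρ2]
      have hne : 1 - a ^ 2 ≠ 0 := by nlinarith
      field_simp
    rw [h1, Real.sqrt_sq (by positivity)]
  rw [hsqrtarg] at darc
  have dtot := (hasDerivAt_id x).add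
    (HasDerivAt.const_mul (2 / a ^ 2)
      (((((hasDerivAt_id x).div_const 2).sub d2).sub
          ((hasDerivAt_id x).const_mul (a ^ 2))).add
        ((dcs.add (HasDerivAt.const_mul (1 - a ^ 2) darc)).div_const 2)))
  have key : -Real.sin x * S + Real.cos x * ((0 - (2:ℕ) * Real.cos x ^ 1 * -Real.sin x) / (2 * S))
      + (1 - a ^ 2) * (1 / (S / ρ) * (-Real.sin x / ρ)) = -2 * Real.sin x * S := by
    have hρne : ρ ≠ 0 := hρpos.ne'
    have hSne : S ≠ 0 := hSpos.ne'
    field_simp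
    ring_nf
    linear_combination (2 * Real.sin x) * hS2
  have heq : phi a x = (1 +
      2 / a ^ 2 *
        (1 / 2 - (Real.cos x * Real.cos x + Real.sin x * -Real.sin x) / 2 - a ^ 2 * 1 +
          (-Real.sin x * S + Real.cos x * ((0 - (2:ℕ) * Real.cos x ^ 1 * -Real.sin x) / (2 * S)) +
              (1 - a ^ 2) * (1 / (S / ρ) * (-Real.sin x / ρ))) /
            2)) := by
    rw [key, phi, ← hS]
    have hane : a ≠ 0 := ha0.ne'
    field_simp
    ring_nf
    linear_combination hpyth
  rw [heq]
  exact dtot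

lemma qfun_cont (a : ℝ) : Continuous (qfun a) := by
  unfold qfun; fun_prop

lemma phi_cont (a : ℝ) : Continuous (phi a) := by
  unfold phi; fun_prop

lemma Gfun_cont (a : ℝ) : Continuous (Gfun a) := by
  unfold Gfun
  have harc : Continuous Real.arcsin := Real.continuous_arcsin
  fun_prop

lemma qfun_mean (a : ℝ) (ha0 : 0 < a) (ha1 : a < 1) :
    (1 / (2 * π)) * ∫ t in (0:ℝ)..(2 * π), qfun a t
      = (2 / (π * a ^ 2)) * (Real.sqrt (1 - a ^ 2) * a
          + (1 - 2 * Real.sqrt (1 - a ^ 2) ^ 2) * Real.arcsin a) := by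
  set α := Real.arcsin a with hαdef
  set ρ := Real.sqrt (1 - a ^ 2) with hρdef
  have hρ2 : ρ ^ 2 = 1 - a ^ 2 := Real.sq_sqrt (by nlinarith)
  have hρpos : 0 < ρ := Real.sqrt_pos.2 (by nlinarith)
  have hαpos : 0 < α := Real.arcsin_pos.2 ha0
  have hα_le : α ≤ π / 2 := Real.arcsin_le_pi_div_two a
  have hsinα : Real.sin α = a := Real.sin_arcsin (by linarith) ha1.le
  have hcosα : Real.cos α = ρ := Real.cos_arcsin a
  have hInt : ∀ u v : ℝ, IntervalIntegrable (qfun a) MeasureTheory.volume u v :=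
    fun u v => (qfun_cont a).intervalIntegrable u v
  have qper : (fun t => qfun a (t + π)) = fun t => qfun a t := by
    funext t; unfold qfun; rw [Real.sin_add_pi, neg_sq, abs_neg]
  have qrefl : (fun t => qfun a (π - t)) = fun t => qfun a t := by
    funext t; unfold qfun; rw [Real.sin_pi_sub]
  -- ∫ over [π, 2π] equals ∫ over [0, π]
  have e2 : ∫ t in π..(2*π), qfun a t = ∫ t in (0:ℝ)..π, qfun a t := by
    have h := intervalIntegral.integral_comp_add_right (a := (0:ℝ)) (b := π)
      (fun t => qfun a t) π
    rw [qper, zero_add] at h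
    rw [show (2:ℝ)*π = π + π by ring]
    exact h.symm
  have e3 : ∫ t in (π/2)..π, qfun a t = ∫ t in (0:ℝ)..(π/2), qfun a t := by
    have h := intervalIntegral.integral_comp_sub_left (a := (0:ℝ)) (b := π/2)
      (fun t => qfun a t) π
    rw [qrefl, sub_zero, show π - π/2 = π/2 by ring] at h
    exact h.symm
  have e4 : ∫ t in (0:ℝ)..α, qfun a t = α := by
    have hone : Set.EqOn (qfun a) (fun _ => (1:ℝ)) (Set.uIcc 0 α) := by
      intro t ht
      rw [Set.uIcc_of_le hαpos.le] at ht
      have h0t : 0 ≤ t := ht.1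
      have htα : t ≤ α := ht.2
      have hsnn : 0 ≤ Real.sin t := Real.sin_nonneg_of_nonneg_of_le_pi h0t
        (by linarith [Real.pi_pos])
      have hsle : Real.sin t ≤ a := by
        have := Real.strictMonoOn_sin.monotoneOn
          ⟨by linarith [Real.pi_pos], by linarith⟩
          ⟨by linarith [Real.pi_pos], hα_le⟩ htα
        rwa [hsinα] at this
      have hmax : max (Real.sin t ^ 2 - a ^ 2) 0 = 0 :=
        max_eq_right (by nlinarith)
      unfold qfun
      rw [hmax, Real.sqrt_zero]
      simp
    rw [intervalIntegral.integral_congr hone]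
    simp
  have e5 : ∫ t in α..(π/2), qfun a t = ∫ t in α..(π/2), phi a t := by
    apply intervalIntegral.integral_congr
    intro t ht
    rw [Set.uIcc_of_le hα_le] at ht
    have hsge : a ≤ Real.sin t := by
      have := Real.strictMonoOn_sin.monotoneOn ⟨by linarith [Real.pi_pos], hα_le⟩
        ⟨by linarith [Real.pi_pos, ht.1], ht.2⟩ ht.1
      rwa [hsinα] at this
    have hsnn : 0 ≤ Real.sin t := le_trans ha0.le hsge
    have hmax : max (Real.sin t ^ 2 - a ^ 2) 0 = Real.sin t ^ 2 - a ^ 2 :=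
      max_eq_left (by nlinarith)
    have hpy := Real.sin_sq_add_cos_sq t
    unfold qfun phi
    rw [hmax, _root_.abs_of_nonneg hsnn,
      show Real.sin t ^ 2 - a ^ 2 = 1 - a ^ 2 - Real.cos t ^ 2 by linarith]
  have e6 : ∫ t in α..(π/2), phi a t = Gfun a (π/2) - Gfun a α := by
    apply intervalIntegral.integral_eq_sub_of_hasDeriv_right_of_le hα_le
      ((Gfun_cont a).continuousOn)
      (fun x hx => (Gfun_deriv a ha0 ha1 hx.1 hx.2).hasDerivWithinAt)
      ((phi_cont a).intervalIntegrable _ _)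
  have hGpi : Gfun a (π/2) = π/2 + 2/a^2 * (π/4 - a^2*(π/2) + (1-a^2)*(π/2)*0) := by
    unfold Gfun
    rw [Real.cos_pi_div_two, Real.sin_pi_div_two]
    norm_num
    left; ring
  have hGα : Gfun a α = α + 2/a^2 * (α/2 - a*ρ/2 - a^2*α + (1-a^2)*(π/2)/2) := by
    unfold Gfun
    rw [hcosα, hsinα, show 1 - a^2 - ρ^2 = 0 by rw [hρ2]; ring, Real.sqrt_zero,
      ← hρdef, div_self hρpos.ne', Real.arcsin_one]
    ring
  have e1 : (∫ t in (0:ℝ)..π, qfun a t) + (∫ t in π..(2*π), qfun a t)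
      = ∫ t in (0:ℝ)..(2*π), qfun a t :=
    intervalIntegral.integral_add_adjacent_intervals (hInt _ _) (hInt _ _)
  have e1' : (∫ t in (0:ℝ)..(π/2), qfun a t) + (∫ t in (π/2)..π, qfun a t)
      = ∫ t in (0:ℝ)..π, qfun a t :=
    intervalIntegral.integral_add_adjacent_intervals (hInt _ _) (hInt _ _)
  have e1'' : (∫ t in (0:ℝ)..α, qfun a t) + (∫ t in α..(π/2), qfun a t)
      = ∫ t in (0:ℝ)..(π/2), qfun a t :=
    intervalIntegral.integral_add_adjacent_intervals (hInt _ _) (hInt _ _)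
  have total : ∫ t in (0:ℝ)..(2*π), qfun a t
      = 4*α + 4*(Gfun a (π/2) - Gfun a α) := by
    rw [← e1, e2, ← e1', e3, ← e1'', e4, e5, e6]; ring
  rw [total, hGpi, hGα]
  have hπ : π ≠ 0 := Real.pi_ne_zero
  have ha : a ≠ 0 := ha0.ne'
  field_simp
  linear_combination (16*α) * hρ2

/-- **Schur function of the coined walk on `ℤ₊` with constant coin.**
For `0 < |γ| < 1` let
`f(z) = (z² - 1 + √((z²-1)² + 4|γ|²z²)) / (2 conj(γ) z²)`
(the branch with `√ → 1` as `z → 0`; the discriminant omits `(-∞,0]` on the open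
disk, so the principal square root gives this branch, and `f(0) = γ`).
Then `f` satisfies the fixed point equation of the period-2 Schur algorithm with
parameters `(γ, 0, γ, 0, …)`, i.e. `f = f₂` where
`f₁(z) = z⁻¹ (f(z) - γ)/(1 - conj(γ) f(z))` and `f₂(z) = z⁻¹ f₁(z)`, and its
`L²`-norm on the unit circle (as the limit of the means over circles of radius
`r → 1⁻`) is `‖f‖² = (2/(π|γ|²)) (ρ|γ| + (1 - 2ρ²) arcsin|γ|)` with
`ρ = √(1 - |γ|²)`. -/
theorem constant_coin_schur_function
    (γ : ℂ) (hγ0 : γ ≠ 0) (hγ1 : ‖γ‖ < 1)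
    (f : ℂ → ℂ) (hf0 : f 0 = γ)
    (hf : ∀ z : ℂ, z ≠ 0 → ‖z‖ < 1 →
      f z = (z ^ 2 - 1 +
          ((z ^ 2 - 1) ^ 2 + 4 * ((‖γ‖ : ℂ)) ^ 2 * z ^ 2) ^ ((1 : ℂ) / 2)) /
        (2 * (starRingEnd ℂ) γ * z ^ 2)) :
    (∀ z : ℂ, z ≠ 0 → ‖z‖ < 1 →
        f z = z⁻¹ * (z⁻¹ * (f z - γ) / (1 - (starRingEnd ℂ) γ * f z))) ∧
      Tendsto
        (fun r : ℝ => (1 / (2 * π)) *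
          ∫ t in (0 : ℝ)..(2 * π), ‖f ((r : ℂ) * Complex.exp (Complex.I * (t : ℂ)))‖ ^ 2)
        (nhdsWithin 1 (Set.Iio 1))
        (nhds ((2 / (π * ‖γ‖ ^ 2)) *
          (Real.sqrt (1 - ‖γ‖ ^ 2) * ‖γ‖ +
            (1 - 2 * Real.sqrt (1 - ‖γ‖ ^ 2) ^ 2) * Real.arcsin ‖γ‖))) := by
  have ha0 : 0 < ‖γ‖ := norm_pos_iff.2 hγ0
  constructor
  · intro z hz hz1
    have hq : (starRingEnd ℂ) γ * z ^ 2 * (f z) ^ 2 = (z ^ 2 - 1) * f z + γ := by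
      rw [hf z hz hz1]
      exact Ff_quad γ hγ0 z hz
    exact part1 γ hγ0 hγ1 z hz (f z) hq
  · -- the parametric integrand in terms of Ff
    set g : ℝ × ℝ → ℝ :=
      fun p => ‖Ff γ ((p.1 : ℂ) * Complex.exp (Complex.I * (p.2 : ℂ)))‖ ^ 2 with hgdef
    have hzfact : ∀ p : ℝ × ℝ, 0 < p.1 →
        ((p.1 : ℂ) * Complex.exp (Complex.I * (p.2 : ℂ))) ≠ 0 ∧
          ‖(p.1 : ℂ) * Complex.exp (Complex.I * (p.2 : ℂ))‖ = p.1 := by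
      intro p hp
      constructor
      · exact mul_ne_zero (by exact_mod_cast hp.ne') (Complex.exp_ne_zero _)
      · rw [norm_mul]
        rw [show Complex.I * (p.2:ℂ) = (p.2:ℂ) * Complex.I by ring]
        rw [Complex.norm_exp_ofReal_mul_I, mul_one,
          Complex.norm_real, Real.norm_eq_abs, abs_of_pos hp]
    have hgc : ∀ p : ℝ × ℝ, p.1 ∈ Set.Icc (1/2 : ℝ) 1 → ContinuousAt g p := by
      intro p hp
      have hp0 : 0 < p.1 := lt_of_lt_of_le (by norm_num) hp.1
      obtain ⟨hz0, hznorm⟩ := hzfact p hp0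
      have h1 : ContinuousAt
          (fun q : ℝ × ℝ => (q.1 : ℂ) * Complex.exp (Complex.I * (q.2 : ℂ))) p := by
        fun_prop
      have h2 : ContinuousAt (fun q : ℝ × ℝ =>
          Ff γ ((q.1 : ℂ) * Complex.exp (Complex.I * (q.2 : ℂ)))) p :=
        ContinuousAt.comp
          (f := fun q : ℝ × ℝ => (q.1 : ℂ) * Complex.exp (Complex.I * (q.2 : ℂ))) (x := p)
          (continuousAt_Ff γ hγ0 hγ1 hz0 (by rw [hznorm]; exact hp.2)) h1
      exact (h2.norm).pow 2
    obtain ⟨C, hC⟩ :=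
      (isCompact_Icc.prod isCompact_Icc :
          IsCompact (Set.Icc (1/2:ℝ) 1 ×ˢ Set.Icc (0:ℝ) (2*π))).exists_bound_of_continuousOn
        (fun p hp => (hgc p hp.1).continuousWithinAt)
    have hmem : Set.Ioo (1/2 : ℝ) 1 ∈ nhdsWithin (1:ℝ) (Set.Iio 1) :=
      Ioo_mem_nhdsLT_of_mem (by norm_num : (1:ℝ) ∈ Set.Ioc (1/2:ℝ) 1)
    have hTend : Tendsto (fun r : ℝ => ∫ t in (0:ℝ)..(2*π), g (r, t))
        (nhdsWithin 1 (Set.Iio 1)) (nhds (∫ t in (0:ℝ)..(2*π), g (1, t))) := by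
      apply intervalIntegral.tendsto_integral_filter_of_dominated_convergence (fun _ => C)
      · filter_upwards [hmem] with r hr
        apply Continuous.aestronglyMeasurable
        apply continuous_iff_continuousAt.2
        intro t
        have h1 : ContinuousAt (fun u : ℝ => ((r, u) : ℝ × ℝ)) t := by fun_prop
        exact ContinuousAt.comp (f := fun u : ℝ => ((r, u) : ℝ × ℝ)) (x := t)
          (hgc (r, t) ⟨hr.1.le, hr.2.le⟩) h1
      · filter_upwards [hmem] with r hr
        apply MeasureTheory.ae_of_all
        intro t ht
        rw [Set.uIoc_of_le (by positivity : (0:ℝ) ≤ 2*π)] at ht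
        exact hC (r, t) ⟨⟨hr.1.le, hr.2.le⟩, ⟨ht.1.le, ht.2⟩⟩
      · exact intervalIntegrable_const
      · apply MeasureTheory.ae_of_all
        intro t _
        have h1 : ContinuousAt (fun r : ℝ => ((r, t) : ℝ × ℝ)) 1 := by fun_prop
        have h : ContinuousAt (fun r : ℝ => g (r, t)) 1 :=
          ContinuousAt.comp (f := fun r : ℝ => ((r, t) : ℝ × ℝ)) (x := 1)
            (hgc (1, t) ⟨by norm_num, le_refl 1⟩) h1
        exact h.tendsto.mono_left nhdsWithin_le_nhds
    have hb : ∫ t in (0:ℝ)..(2*π), g (1, t) = ∫ t in (0:ℝ)..(2*π), qfun ‖γ‖ t := by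
      apply intervalIntegral.integral_congr
      intro t _
      show ‖Ff γ ((1 : ℂ) * Complex.exp (Complex.I * (t : ℂ)))‖ ^ 2 = qfun ‖γ‖ t
      rw [one_mul]
      exact Ff_boundary γ hγ0 hγ1 t
    have hval : (1 / (2 * π)) * ∫ t in (0:ℝ)..(2*π), g (1, t)
        = (2 / (π * ‖γ‖ ^ 2)) * (Real.sqrt (1 - ‖γ‖ ^ 2) * ‖γ‖ +
            (1 - 2 * Real.sqrt (1 - ‖γ‖ ^ 2) ^ 2) * Real.arcsin ‖γ‖) := by
      rw [hb]
      exact qfun_mean ‖γ‖ ha0 hγ1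
    have hT2 := hTend.const_mul (1 / (2 * π))
    rw [hval] at hT2
    apply Tendsto.congr' _ hT2
    filter_upwards [hmem] with r hr
    congr 1
    apply intervalIntegral.integral_congr
    intro t _
    obtain ⟨hz0, hznorm⟩ := hzfact (r, t) (by linarith [hr.1])
    show g (r, t) = ‖f ((r : ℂ) * Complex.exp (Complex.I * (t : ℂ)))‖ ^ 2
    rw [hf _ hz0 (by rw [hznorm]; exact hr.2)]
    rfl
end
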